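/- arXiv:1405.2509 — 6 statements merged into one kernel-verified Lean document; each statement's English description precedes it below -/
import Mathlib

section
/- Let g(t) = t^m/(1 + t + ... + t^{m-1}) = (t^{m+1} - t^m)/(t^m - 1) for m ≥ 2. Then g is convex on (0, ∞). -/
open Finset Set Filter

lemma amgm (m j : ℕ) (hj : j ≤ m) (hm : 1 ≤ m) {t : ℝ} (ht : 0 < t) :
    (m : ℝ) * t ^ j ≤ (j : ℝ) * t ^ m + ((m : ℝ) - j) := by
  have hm0 : (0:ℝ) < m := by exact_mod_cast hm
  have hw1 : (0:ℝ) ≤ (j : ℝ) / m := by positivity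
  have hw2 : (0:ℝ) ≤ ((m : ℝ) - j) / m := by
    apply div_nonneg _ hm0.le
    have : (j:ℝ) ≤ m := by exact_mod_cast hj
    linarith
  have hp1 : (0:ℝ) ≤ t ^ m := by positivity
  have hsum : (j : ℝ) / m + ((m : ℝ) - j) / m = 1 := by field_simp; ring
  have key := Real.geom_mean_le_arith_mean2_weighted hw1 hw2 hp1 zero_le_one hsum
  have hpow : (t ^ m) ^ ((j : ℝ) / m) = t ^ j := by
    rw [← Real.rpow_natCast t m, ← Real.rpow_natCast t j, ← Real.rpow_mul ht.le]
    congr 1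
    field_simp
  rw [hpow, Real.one_rpow, mul_one] at key
  have h2 := mul_le_mul_of_nonneg_left key hm0.le
  calc (m:ℝ) * t ^ j ≤ (m:ℝ) * ((j:ℝ)/m * t^m + ((m:ℝ)-j)/m * 1) := h2
    _ = (j : ℝ) * t ^ m + ((m : ℝ) - j) := by field_simp

lemma gauss (m : ℕ) : (∑ k ∈ range m, ((k : ℝ) + 1)) = m * (m + 1) / 2 := by
  induction m with
  | zero => simp
  | succ n ih => rw [Finset.sum_range_succ, ih]; push_cast; ring

lemma Bnn (m : ℕ) (hm : 2 ≤ m) {t : ℝ} (ht : 0 < t) :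
    2 * ∑ k ∈ range m, t ^ (k + 1) ≤ ((m : ℝ) + 1) * t ^ m + ((m : ℝ) - 1) := by
  have hm0 : (0:ℝ) < m := by exact_mod_cast (le_trans one_le_two hm)
  have step : (m:ℝ) * ∑ k ∈ range m, t ^ (k + 1)
      ≤ ∑ k ∈ range m, (((k:ℝ) + 1) * t ^ m + ((m : ℝ) - ((k:ℝ)+1))) := by
    rw [Finset.mul_sum]
    apply Finset.sum_le_sum
    intro k hk
    have hk' : k + 1 ≤ m := Finset.mem_range.mp hk
    have := amgm m (k+1) hk' (le_trans one_le_two hm) ht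
    push_cast at this ⊢
    linarith
  have hsplit : ∑ k ∈ range m, (((k:ℝ) + 1) * t ^ m + ((m : ℝ) - ((k:ℝ)+1)))
      = (m * (m+1)/2) * t ^ m + ((m:ℝ) * m - m * (m+1)/2) := by
    rw [Finset.sum_add_distrib, ← Finset.sum_mul, gauss]
    congr 1
    rw [Finset.sum_sub_distrib, gauss, Finset.sum_const, Finset.card_range]
    simp [mul_comm]
  rw [hsplit] at step
  have goal2 : (m:ℝ) * (2 * ∑ k ∈ range m, t ^ (k + 1))
      ≤ (m:ℝ) * (((m : ℝ) + 1) * t ^ m + ((m : ℝ) - 1)) := by nlinarith [step]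
  exact le_of_mul_le_mul_left goal2 hm0



lemma phi_nonneg_ne (m : ℕ) (hm : 2 ≤ m) {x : ℝ} (hx : 0 < x) (hx1 : x ≠ 1) :
    0 ≤ 2 * (∑ k ∈ range m, (k:ℝ) * x ^ (k-1))^2
      - (∑ k ∈ range m, x ^ k) * (∑ k ∈ range m, (k:ℝ) * (((k-1:ℕ):ℝ) * x ^ (k-1-1))) := by
  set F : ℝ → ℝ := fun t => (t^m - 1)/(t - 1) with hF
  set F1 : ℝ → ℝ := fun t => ((m:ℝ)*t^(m-1)*(t-1) - (t^m - 1)*1) / (t-1)^2 with hF1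
  have hPF : ∀ y : ℝ, y ≠ 1 → (∑ k ∈ range m, y ^ k) = F y := fun y hy => geom_sum_eq hy m
  have hS1F1 : ∀ y : ℝ, y ≠ 1 → (∑ k ∈ range m, (k:ℝ) * y ^ (k-1)) = F1 y := by
    intro y hy
    have hne : y - 1 ≠ 0 := sub_ne_zero.mpr hy
    have hdP : HasDerivAt (fun t : ℝ => ∑ k ∈ range m, t ^ k)
        (∑ k ∈ range m, (k:ℝ) * y ^ (k-1)) y := by
      have := HasDerivAt.fun_sum (fun k (_ : k ∈ range m) => hasDerivAt_pow k y)
      simpa using this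
    have hdF : HasDerivAt F (((m:ℝ)*y^(m-1)*(y-1) - (y^m - 1)*1) / (y-1)^2) y :=
      ((hasDerivAt_pow m y).sub_const 1).div ((hasDerivAt_id y).sub_const 1) hne
    have hev : (fun t : ℝ => ∑ k ∈ range m, t ^ k) =ᶠ[nhds y] F := by
      filter_upwards [IsOpen.mem_nhds isOpen_ne hy] with t ht
      exact hPF t ht
    exact hdP.unique (hdF.congr_of_eventuallyEq hev)
  -- second derivative
  have hne : x - 1 ≠ 0 := sub_ne_zero.mpr hx1
  have hdS1 : HasDerivAt (fun t : ℝ => ∑ k ∈ range m, (k:ℝ) * t ^ (k-1))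
      (∑ k ∈ range m, (k:ℝ) * (((k-1:ℕ):ℝ) * x ^ (k-1-1))) x :=
    HasDerivAt.fun_sum (fun k (_ : k ∈ range m) =>
      HasDerivAt.const_mul (k:ℝ) (hasDerivAt_pow (k-1) x))
  have hN1 : HasDerivAt (fun t : ℝ => (m:ℝ)*t^(m-1)*(t-1) - (t^m - 1)*1)
      (((m:ℝ) * (((m-1:ℕ):ℝ) * x^(m-1-1))) * (x-1) + ((m:ℝ)*x^(m-1)) * 1
        - ((m:ℝ) * x^(m-1) * 1 + (x^m - 1) * 0)) x := by
    exact ((HasDerivAt.const_mul (m:ℝ) (hasDerivAt_pow (m-1) x)).mul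
      ((hasDerivAt_id x).sub_const 1)).sub
      (((hasDerivAt_pow m x).sub_const 1).mul (hasDerivAt_const x 1))
  have hden2 : HasDerivAt (fun t : ℝ => (t-1)^2) (((2:ℕ):ℝ) * (x-1)^(2-1) * 1) x :=
    ((hasDerivAt_id x).sub_const 1).pow 2
  have hdF1 : HasDerivAt F1
      (((((m:ℝ) * (((m-1:ℕ):ℝ) * x^(m-1-1))) * (x-1) + ((m:ℝ)*x^(m-1)) * 1
        - ((m:ℝ) * x^(m-1) * 1 + (x^m - 1) * 0)) * (x-1)^2
        - ((m:ℝ)*x^(m-1)*(x-1) - (x^m - 1)*1) * (((2:ℕ):ℝ) * (x-1)^(2-1) * 1))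
        / ((x-1)^2)^2) x := hN1.div hden2 (pow_ne_zero 2 hne)
  have hev1 : (fun t : ℝ => ∑ k ∈ range m, (k:ℝ) * t ^ (k-1)) =ᶠ[nhds x] F1 := by
    filter_upwards [IsOpen.mem_nhds isOpen_ne hx1] with t ht
    exact hS1F1 t ht
  have hS2E := hdS1.unique (hdF1.congr_of_eventuallyEq hev1)
  rw [hS2E, hS1F1 x hx1, hPF x hx1]
  -- now pure algebra
  have hB0 : 0 ≤ ((m : ℝ) + 1) * x ^ m + ((m : ℝ) - 1) - 2 * (x * F x) := by
    have hsum : ∑ k ∈ range m, x^(k+1) = x * F x := by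
      rw [← hPF x hx1, Finset.mul_sum]
      exact Finset.sum_congr rfl fun k _ => by ring
    have := Bnn m hm hx
    rw [hsum] at this
    linarith
  have hc1 : ((m-1:ℕ):ℝ) = (m:ℝ) - 1 := by
    rw [Nat.cast_sub (by omega : 1 ≤ m), Nat.cast_one]
  have e1 : x^(m-1) = x^(m-2) * x := by
    rw [← pow_succ]; congr 1 <;> omega
  have e2 : x^m = x^(m-2) * x^2 := by
    rw [← pow_add]; congr 1 <;> omega
  have e3 : x^(m-1-1) = x^(m-2) := by
    congr 1 <;> omega
  have ha : 0 < x^(m-2) := by positivity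
  have hm0 : (0:ℝ) ≤ m := by positivity
  have identity : 2 * (F1 x)^2
      - F x *
        (((((m:ℝ) * (((m-1:ℕ):ℝ) * x^(m-1-1))) * (x-1) + ((m:ℝ)*x^(m-1)) * 1
          - ((m:ℝ) * x^(m-1) * 1 + (x^m - 1) * 0)) * (x-1)^2
          - ((m:ℝ)*x^(m-1)*(x-1) - (x^m - 1)*1) * (((2:ℕ):ℝ) * (x-1)^(2-1) * 1))
          / ((x-1)^2)^2)
      = (m:ℝ) * x^(m-2) * (((m : ℝ) + 1) * x^m + ((m : ℝ) - 1) - 2 * (x * F x))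
        / (x-1)^2 := by
    simp only [hF, hF1, hc1, e1, e2, e3]
    generalize x^(m-2) = a
    field_simp
    ring
  rw [identity]
  apply div_nonneg _ (sq_nonneg _)
  exact mul_nonneg (mul_nonneg hm0 ha.le) hB0



lemma phi_nonneg (m : ℕ) (hm : 2 ≤ m) {x : ℝ} (hx : 0 < x) :
    0 ≤ 2 * (∑ k ∈ range m, (k:ℝ) * x ^ (k-1))^2
      - (∑ k ∈ range m, x ^ k) * (∑ k ∈ range m, (k:ℝ) * (((k-1:ℕ):ℝ) * x ^ (k-1-1))) := by
  rcases eq_or_ne x 1 with rfl | hne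
  · set φ : ℝ → ℝ := fun t => 2 * (∑ k ∈ range m, (k:ℝ) * t ^ (k-1))^2
      - (∑ k ∈ range m, t ^ k) * (∑ k ∈ range m, (k:ℝ) * (((k-1:ℕ):ℝ) * t ^ (k-1-1))) with hφ
    have hcont : Continuous φ := by
      apply Continuous.sub
      · exact continuous_const.mul ((continuous_finset_sum _ fun k _ =>
          continuous_const.mul (continuous_pow (k-1))).pow 2)
      · exact (continuous_finset_sum _ fun k _ => continuous_pow k).mul
          (continuous_finset_sum _ fun k _ =>
            continuous_const.mul (continuous_const.mul (continuous_pow (k-1-1))))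
    have ht : Tendsto φ (nhdsWithin (1:ℝ) {(1:ℝ)}ᶜ) (nhds (φ 1)) :=
      (hcont.tendsto 1).mono_left nhdsWithin_le_nhds
    have hev : ∀ᶠ t in nhdsWithin (1:ℝ) {(1:ℝ)}ᶜ, 0 ≤ φ t := by
      have h1 : Ioi (0:ℝ) ∈ nhds (1:ℝ) := isOpen_Ioi.mem_nhds (by norm_num)
      filter_upwards [mem_nhdsWithin_of_mem_nhds h1, self_mem_nhdsWithin] with t ht0 ht1
      exact phi_nonneg_ne m hm ht0 ht1
    exact ge_of_tendsto ht hev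
  · exact phi_nonneg_ne m hm hx hne

/-- For an integer `m ≥ 2`, the function `g(t) = t^m / (1 + t + ⋯ + t^{m-1})`
is convex on `(0, ∞)`. -/
theorem stmt0 (m : ℕ) (hm : 2 ≤ m) :
    ConvexOn ℝ (Set.Ioi (0 : ℝ)) (fun t => t ^ m / ∑ k ∈ Finset.range m, t ^ k) := by
  have hPpos : ∀ x : ℝ, 0 < x → 0 < ∑ k ∈ range m, x ^ k := fun x hx =>
    Finset.sum_pos (fun k _ => pow_pos hx k) (by rw [Finset.nonempty_range_iff]; omega)
  have hdPsum : ∀ x : ℝ, HasDerivAt (fun t : ℝ => ∑ k ∈ range m, t ^ k)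
      (∑ k ∈ range m, (k:ℝ) * x ^ (k-1)) x := by
    intro x
    have := HasDerivAt.fun_sum (fun k (_ : k ∈ range m) => hasDerivAt_pow k x)
    simpa using this
  have hdS1 : ∀ x : ℝ, HasDerivAt (fun t : ℝ => ∑ k ∈ range m, (k:ℝ) * t ^ (k-1))
      (∑ k ∈ range m, (k:ℝ) * (((k-1:ℕ):ℝ) * x ^ (k-1-1))) x := fun x =>
    HasDerivAt.fun_sum fun k _ => HasDerivAt.const_mul (k:ℝ) (hasDerivAt_pow (k-1) x)
  have hconv : ConvexOn ℝ (Ioi (0:ℝ))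
      (fun t : ℝ => t - 1 + (∑ k ∈ range m, t ^ k)⁻¹) := by
    apply convexOn_of_hasDerivWithinAt2_nonneg (f' := fun x =>
        1 + -(∑ k ∈ range m, (k:ℝ) * x ^ (k-1)) / (∑ k ∈ range m, x ^ k) ^ 2)
      (f'' := fun x =>
        (2 * (∑ k ∈ range m, (k:ℝ) * x ^ (k-1))^2
          - (∑ k ∈ range m, x ^ k) * (∑ k ∈ range m, (k:ℝ) * (((k-1:ℕ):ℝ) * x ^ (k-1-1))))
          / (∑ k ∈ range m, x ^ k) ^ 3)
      (convex_Ioi 0)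
    · apply ContinuousOn.add
      · exact (continuous_id.sub continuous_const).continuousOn
      · exact ContinuousOn.inv₀
          (continuous_finset_sum _ fun k _ => continuous_pow k).continuousOn
          (fun x hx => (hPpos x hx).ne')
    · intro x hx
      rw [interior_Ioi] at hx
      exact (((hasDerivAt_id x).sub_const 1).add
        ((hdPsum x).inv (hPpos x hx).ne')).hasDerivWithinAt
    · intro x hx
      rw [interior_Ioi] at hx
      have hPne : (∑ k ∈ range m, x ^ k) ≠ 0 := (hPpos x hx).ne'
      have hdivneg := ((hdS1 x).neg).div ((hdPsum x).pow 2) (pow_ne_zero 2 hPne)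
      have hd := (hasDerivAt_const x (1:ℝ)).add hdivneg
      have key : 0 + ((-(∑ k ∈ range m, (k:ℝ) * (((k-1:ℕ):ℝ) * x ^ (k-1-1)))) * (∑ k ∈ range m, x ^ k) ^ 2 -
            (-(∑ k ∈ range m, (k:ℝ) * x ^ (k-1))) *
              (((2:ℕ):ℝ) * (∑ k ∈ range m, x ^ k) ^ (2-1) * (∑ k ∈ range m, (k:ℝ) * x ^ (k-1)))) /
            ((∑ k ∈ range m, x ^ k) ^ 2) ^ 2
          = (2 * (∑ k ∈ range m, (k:ℝ) * x ^ (k-1))^2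
            - (∑ k ∈ range m, x ^ k) * (∑ k ∈ range m, (k:ℝ) * (((k-1:ℕ):ℝ) * x ^ (k-1-1))))
            / (∑ k ∈ range m, x ^ k) ^ 3 := by
        field_simp
        ring
      exact (key ▸ hd).hasDerivWithinAt
    · intro x hx
      rw [interior_Ioi] at hx
      exact div_nonneg (phi_nonneg m hm hx) (pow_nonneg (hPpos x hx).le 3)
  apply hconv.congr
  intro x hx
  have hp := hPpos x hx
  have hg := geom_sum_mul x m
  field_simp
  linear_combination hg
end

section
/- For positive semidefinite matrices A, B ∈ M_n(ℂ), there exists a unitary V ∈ M_n(ℂ) such that |BA| ≤ (A² + V B² V*)/2 in the Loewner order. -/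
open scoped ComplexOrder InnerProductSpace Matrix

/-- The absolute value `|X| = (X* X)^{1/2}` of a complex matrix. -/
noncomputable def matAbs {n : ℕ} (X : Matrix (Fin n) (Fin n) ℂ) : Matrix (Fin n) (Fin n) ℂ :=
  (Matrix.posSemidef_conjTranspose_mul_self X).1.eigenvectorUnitary.1 *
    Matrix.diagonal ((↑) ∘ (√·) ∘ (Matrix.posSemidef_conjTranspose_mul_self X).1.eigenvalues) *
    (star (Matrix.posSemidef_conjTranspose_mul_self X).1.eigenvectorUnitary : Matrix (Fin n) (Fin n) ℂ)

lemma matAbs_posSemidef' {n : ℕ} (X : Matrix (Fin n) (Fin n) ℂ) : (matAbs X).PosSemidef := by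
  unfold matAbs
  have hd : (Matrix.diagonal ((↑) ∘ (√·) ∘
      (Matrix.posSemidef_conjTranspose_mul_self X).1.eigenvalues) :
        Matrix (Fin n) (Fin n) ℂ).PosSemidef :=
    Matrix.posSemidef_diagonal_iff.mpr fun i => by
      simp only [Function.comp_apply]
      exact_mod_cast Real.sqrt_nonneg _
  have := hd.mul_mul_conjTranspose_same
    ((Matrix.posSemidef_conjTranspose_mul_self X).1.eigenvectorUnitary : Matrix (Fin n) (Fin n) ℂ)
  exact this

lemma matAbs_mul_self' {n : ℕ} (X : Matrix (Fin n) (Fin n) ℂ) :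
    matAbs X * matAbs X = Xᴴ * X := by
  have hS := (Matrix.posSemidef_conjTranspose_mul_self X).1.spectral_theorem
  conv_rhs => rw [hS]
  have hU := Matrix.UnitaryGroup.star_mul_self
    (Matrix.posSemidef_conjTranspose_mul_self X).1.eigenvectorUnitary
  unfold matAbs
  simp only [Unitary.conjStarAlgAut_apply, Matrix.mul_assoc]
  rw [← Matrix.mul_assoc _ _ (Matrix.diagonal _ * _), hU, Matrix.one_mul,
    ← Matrix.mul_assoc (Matrix.diagonal _), Matrix.diagonal_mul_diagonal]
  congr 3
  funext i
  simp only [Function.comp_apply]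
  rw [← Complex.ofReal_mul, Real.mul_self_sqrt
    ((Matrix.posSemidef_conjTranspose_mul_self X).eigenvalues_nonneg i)]
  rfl

open Matrix LinearMap in
lemma toEuclideanLin_mul' {n : ℕ} (A B : Matrix (Fin n) (Fin n) ℂ) :
    Matrix.toEuclideanLin (A * B) =
      (Matrix.toEuclideanLin A).comp (Matrix.toEuclideanLin B) := by
  ext v
  simp [Matrix.toEuclideanLin_apply, Matrix.mulVec_mulVec]

open Matrix in
lemma toEuclideanLin_one' {n : ℕ} :
    Matrix.toEuclideanLin (1 : Matrix (Fin n) (Fin n) ℂ) = LinearMap.id := by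
  ext v
  simp [Matrix.toEuclideanLin_apply]

open Matrix in
lemma exists_unitary_polar {n : ℕ} (X : Matrix (Fin n) (Fin n) ℂ) :
    ∃ M ∈ Matrix.unitaryGroup (Fin n) ℂ, M * matAbs X = X := by
  classical
  set E := EuclideanSpace ℂ (Fin n)
  set T : E →ₗ[ℂ] E := Matrix.toEuclideanLin X with hT
  set P : E →ₗ[ℂ] E := Matrix.toEuclideanLin (matAbs X) with hPdef
  have hPsd : (matAbs X).PosSemidef :=
    matAbs_posSemidef' X
  have hP2 : matAbs X * matAbs X = Xᴴ * X := by
    exact matAbs_mul_self' X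
  have hPadj : LinearMap.adjoint P = P := by
    rw [hPdef, ← Matrix.toEuclideanLin_conjTranspose_eq_adjoint, hPsd.1]
  have hcomp : P ∘ₗ P = LinearMap.adjoint T ∘ₗ T := by
    rw [hT, hPdef, ← Matrix.toEuclideanLin_conjTranspose_eq_adjoint,
      ← toEuclideanLin_mul', ← toEuclideanLin_mul', hP2]
  have hinner : ∀ v : E, ⟪P v, P v⟫_ℂ = ⟪T v, T v⟫_ℂ := by
    intro v
    calc ⟪P v, P v⟫_ℂ = ⟪LinearMap.adjoint P v, P v⟫_ℂ := by rw [hPadj]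
      _ = ⟪v, P (P v)⟫_ℂ := by rw [LinearMap.adjoint_inner_left]
      _ = ⟪v, (LinearMap.adjoint T ∘ₗ T) v⟫_ℂ := by
          rw [show P (P v) = (P ∘ₗ P) v from rfl, hcomp]
      _ = ⟪T v, T v⟫_ℂ := by
          rw [LinearMap.comp_apply, LinearMap.adjoint_inner_right]
  have hnormPT : ∀ v : E, ‖P v‖ = ‖T v‖ := by
    intro v
    rw [norm_eq_sqrt_re_inner (𝕜 := ℂ), norm_eq_sqrt_re_inner (𝕜 := ℂ), hinner]
  have hker : LinearMap.ker P ≤ LinearMap.ker T := by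
    intro v hv
    rw [LinearMap.mem_ker] at hv ⊢
    have := hnormPT v
    rw [hv, norm_zero] at this
    exact norm_eq_zero.mp this.symm
  let L0 : LinearMap.range P →ₗ[ℂ] E :=
    ((LinearMap.ker P).liftQ T hker).comp P.quotKerEquivRange.symm.toLinearMap
  have hL0 : ∀ v : E, L0 ⟨P v, ⟨v, rfl⟩⟩ = T v := by
    intro v
    have h1 : P.quotKerEquivRange.symm ⟨P v, ⟨v, rfl⟩⟩ = (LinearMap.ker P).mkQ v :=
      P.quotKerEquivRange_symm_apply_image v ⟨v, rfl⟩
    simp only [L0, LinearMap.comp_apply, LinearEquiv.coe_toLinearMap, h1,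
      Submodule.mkQ_apply, Submodule.liftQ_apply]
  have hnorm0 : ∀ s : LinearMap.range P, ‖L0 s‖ = ‖s‖ := by
    intro s
    obtain ⟨v, hv⟩ := s.2
    have hs : s = ⟨P v, ⟨v, rfl⟩⟩ := Subtype.ext hv.symm
    rw [hs, hL0, ← hnormPT]
    rfl
  let L : (LinearMap.range P) →ₗᵢ[ℂ] E := ⟨L0, hnorm0⟩
  let U : E →ₗᵢ[ℂ] E := L.extend
  have hUP : ∀ v : E, U (P v) = T v := by
    intro v
    have := L.extend_apply ⟨P v, ⟨v, rfl⟩⟩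
    rw [this]
    exact hL0 v
  set M : Matrix (Fin n) (Fin n) ℂ := Matrix.toEuclideanLin.symm U.toLinearMap with hMdef
  have hM : Matrix.toEuclideanLin M = U.toLinearMap := by
    rw [hMdef, LinearEquiv.apply_symm_apply]
  refine ⟨M, ?_, ?_⟩
  · rw [Matrix.mem_unitaryGroup_iff', Matrix.star_eq_conjTranspose]
    apply Matrix.toEuclideanLin.injective
    rw [toEuclideanLin_mul', Matrix.toEuclideanLin_conjTranspose_eq_adjoint, hM,
      toEuclideanLin_one']
    refine LinearMap.ext fun x => ext_inner_right ℂ fun y => ?_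
    simp only [LinearMap.comp_apply, LinearMap.id_apply]
    rw [LinearMap.adjoint_inner_left]
    exact U.inner_map_map x y
  · apply Matrix.toEuclideanLin.injective
    rw [toEuclideanLin_mul', hM]
    exact LinearMap.ext fun v => hUP v

lemma posSemidef_real_smul {n : ℕ} {N : Matrix (Fin n) (Fin n) ℂ} (c : ℝ) (hc : 0 ≤ c)
    (hN : N.PosSemidef) : ((c : ℂ) • N).PosSemidef := by
  constructor
  · rw [Matrix.IsHermitian, Matrix.conjTranspose_smul, hN.1]
    congr 1
    simp
  · exact (hN.smul (show (0 : ℂ) ≤ (c : ℂ) by exact_mod_cast hc)).2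

/-- For positive semidefinite `A, B`, there is a unitary `V` with
`|BA| ≤ (A² + V B² V*)/2` in the Loewner order. -/
theorem stmt3 {n : ℕ} (A B : Matrix (Fin n) (Fin n) ℂ)
    (hA : A.PosSemidef) (hB : B.PosSemidef) :
    ∃ V ∈ Matrix.unitaryGroup (Fin n) ℂ,
      ((1 / 2 : ℂ) • (A ^ 2 + V * B ^ 2 * star V) - matAbs (B * A)).PosSemidef := by
  obtain ⟨M, hMu, hMX⟩ := exists_unitary_polar (B * A)
  refine ⟨star M, Unitary.star_mem hMu, ?_⟩
  rw [star_star]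
  have hMM : star M * M = 1 := Matrix.mem_unitaryGroup_iff'.mp hMu
  have h1 : matAbs (B * A) = Mᴴ * (B * A) := by
    conv_rhs => rw [← Matrix.star_eq_conjTranspose, ← hMX, ← Matrix.mul_assoc, hMM,
      Matrix.one_mul]
  have habsH : (matAbs (B * A)).IsHermitian :=
    (matAbs_posSemidef' (B * A)).1
  have h2 : matAbs (B * A) = A * B * M := by
    conv_lhs => rw [← habsH, h1]
    simp [Matrix.conjTranspose_mul, hA.1.eq, hB.1.eq, Matrix.mul_assoc]
  have h1' : matAbs (B * A) = Mᴴ * B * A := by rw [h1, Matrix.mul_assoc]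
  have h3 : matAbs (B * A) = (1/2 : ℂ) • (Mᴴ * B * A + A * B * M) := by
    rw [← h1', ← h2]
    module
  have key : (1 / 2 : ℂ) • (A ^ 2 + star M * B ^ 2 * M) - matAbs (B * A)
      = (1/2 : ℂ) • ((A - B * M)ᴴ * (A - B * M)) := by
    rw [h3, Matrix.star_eq_conjTranspose]
    rw [show (A - B * M)ᴴ = A - Mᴴ * B by
      simp [Matrix.conjTranspose_sub, Matrix.conjTranspose_mul, hA.1.eq, hB.1.eq]]
    rw [show (A - Mᴴ * B) * (A - B * M)
        = (A ^ 2 + Mᴴ * B ^ 2 * M) - (Mᴴ * B * A + A * B * M) by noncomm_ring]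
    module
  rw [key]
  have : (1/2 : ℂ) = ((1/2 : ℝ) : ℂ) := by norm_num
  rw [this]
  exact posSemidef_real_smul _ (by norm_num) (Matrix.posSemidef_conjTranspose_mul_self _)
end

section
/- For any unitarily invariant norm ‖·‖ on M_n(ℂ) and all X, Y ∈ M_n(ℂ), the Cauchy–Schwarz inequality ‖X*Y‖ ≤ ‖X*X‖^{1/2} ‖Y*Y‖^{1/2} holds. -/
open Matrix
open scoped ComplexOrder

namespace Matrix.PosSemidef
variable {m : Type*} [Fintype m] [DecidableEq m] {A : Matrix m m ℂ}

noncomputable def sqrt (hA : A.PosSemidef) : Matrix m m ℂ :=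
  (hA.1.eigenvectorUnitary : Matrix m m ℂ) * diagonal ((↑) ∘ (√·) ∘ hA.1.eigenvalues) *
    (star (hA.1.eigenvectorUnitary : Matrix m m ℂ))

lemma posSemidef_sqrt (hA : A.PosSemidef) : PosSemidef hA.sqrt := by
  apply PosSemidef.mul_mul_conjTranspose_same
  refine posSemidef_diagonal_iff.mpr fun i => ?_
  simp only [Function.comp_apply]
  exact_mod_cast Real.sqrt_nonneg _

lemma sqrt_mul_self (hA : A.PosSemidef) : hA.sqrt * hA.sqrt = A := by
  have hUU : star (hA.1.eigenvectorUnitary : Matrix m m ℂ) * (hA.1.eigenvectorUnitary : Matrix m m ℂ) = 1 :=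
    Matrix.mem_unitaryGroup_iff'.mp hA.1.eigenvectorUnitary.2
  have hEE : diagonal ((↑) ∘ (√·) ∘ hA.1.eigenvalues : m → ℂ) *
      diagonal ((↑) ∘ (√·) ∘ hA.1.eigenvalues : m → ℂ) = diagonal (RCLike.ofReal ∘ hA.1.eigenvalues) := by
    rw [diagonal_mul_diagonal]
    congr 1
    funext v
    simp only [Function.comp_apply]
    rw [← Complex.ofReal_mul, Real.mul_self_sqrt (hA.eigenvalues_nonneg v)]
    rfl
  conv_rhs => rw [hA.1.spectral_theorem, Unitary.conjStarAlgAut_apply]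
  simp only [sqrt, mul_assoc]
  rw [← mul_assoc (star (hA.1.eigenvectorUnitary : Matrix m m ℂ)), hUU, one_mul, ← mul_assoc (diagonal _) (diagonal _), hEE]

end Matrix.PosSemidef

variable {n : ℕ}

section Basic
variable {N : Matrix (Fin n) (Fin n) ℂ → ℝ}
  (htri : ∀ X Y, N (X + Y) ≤ N X + N Y)
  (hsmul : ∀ (c : ℂ) X, N (c • X) = ‖c‖ * N X)

include hsmul in
lemma N_zero : N 0 = 0 := by
  have := hsmul 0 0
  simpa using this

include hsmul in
lemma N_neg (M) : N (-M) = N M := by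
  have := hsmul (-1) M
  simpa using this

include htri hsmul in
lemma N_nonneg (M) : 0 ≤ N M := by
  have h1 := htri M (-M)
  rw [add_neg_cancel, N_zero hsmul, N_neg hsmul] at h1
  linarith

include htri hsmul in
lemma N_abs_sub (A B) : |N A - N B| ≤ N (A - B) := by
  rw [abs_le]
  constructor
  · have := htri (A - B) B  -- wrong direction; want N B ≤ N (B - A) + N A
    have h2 := htri (B - A) A
    rw [sub_add_cancel] at h2
    have : N (B - A) = N (A - B) := by rw [← N_neg hsmul (A - B), neg_sub]
    linarith
  · have h1 := htri (A - B) B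
    rw [sub_add_cancel] at h1
    linarith

end Basic


section Cont
variable {N : Matrix (Fin n) (Fin n) ℂ → ℝ}
  (htri : ∀ X Y, N (X + Y) ≤ N X + N Y)
  (hsmul : ∀ (c : ℂ) X, N (c • X) = ‖c‖ * N X)

include hsmul in
lemma N_zero' : N 0 = 0 := by simpa using hsmul 0 0

include htri hsmul in
lemma N_sum_le {ι : Type*} (s : Finset ι) (f : ι → Matrix (Fin n) (Fin n) ℂ) :
    N (∑ i ∈ s, f i) ≤ ∑ i ∈ s, N (f i) := by
  classical
  induction s using Finset.cons_induction with
  | empty => simp [N_zero' hsmul]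
  | cons a s ha ih =>
    rw [Finset.sum_cons, Finset.sum_cons]
    exact le_trans (htri _ _) (by linarith)

include htri hsmul in
lemma N_decomp (D : Matrix (Fin n) (Fin n) ℂ) :
    N D ≤ ∑ i : Fin n, ∑ j : Fin n, ‖D i j‖ * N (Matrix.single i j 1) := by
  conv_lhs => rw [matrix_eq_sum_single D]
  refine le_trans (N_sum_le htri hsmul _ _) (Finset.sum_le_sum fun i _ => ?_)
  refine le_trans (N_sum_le htri hsmul _ _) (Finset.sum_le_sum fun j _ => ?_)
  have : Matrix.single i j (D i j) = (D i j) • Matrix.single i j 1 := by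
    rw [smul_single]; simp
  rw [this, hsmul]

include htri hsmul in
lemma N_cont : Continuous N := by
  rw [continuous_iff_continuousAt]
  intro M₀
  have key : ∀ A B : Matrix (Fin n) (Fin n) ℂ, |N A - N B| ≤
      ∑ i : Fin n, ∑ j : Fin n, ‖(A - B) i j‖ * N (Matrix.single i j 1) := by
    intro A B
    refine le_trans ?_ (N_decomp htri hsmul (A - B))
    rw [abs_le]
    constructor
    · have h2 := htri (B - A) A
      rw [sub_add_cancel] at h2
      have h3 : N (B - A) = N (A - B) := by
        have h4 := hsmul (-1) (A - B)
        simp only [neg_smul, one_smul, norm_neg, norm_one, one_mul, neg_sub] at h4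
        exact h4
      linarith
    · have h1 := htri (A - B) B
      rw [sub_add_cancel] at h1
      linarith
  have hg : Filter.Tendsto (fun M => ∑ i : Fin n, ∑ j : Fin n,
      ‖(M - M₀) i j‖ * N (Matrix.single i j 1)) (nhds M₀) (nhds 0) := by
    have hc : Continuous fun M : Matrix (Fin n) (Fin n) ℂ => ∑ i : Fin n, ∑ j : Fin n,
        ‖(M - M₀) i j‖ * N (Matrix.single i j 1) := by
      refine continuous_finset_sum _ fun i _ => continuous_finset_sum _ fun j _ => ?_
      refine Continuous.mul ?_ continuous_const
      have : Continuous fun M : Matrix (Fin n) (Fin n) ℂ => (M - M₀) i j := by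
        exact ((continuous_apply j).comp ((continuous_apply i).comp
          (continuous_id.sub continuous_const)))
      exact this.norm
    have := hc.tendsto M₀
    simpa using this
  have h0 : Filter.Tendsto (fun M => N M - N M₀) (nhds M₀) (nhds 0) :=
    squeeze_zero_norm (fun M => key M M₀) hg
  have := h0.add_const (N M₀)
  exact (by simpa using this : Filter.Tendsto (fun x => N x) (nhds M₀) (nhds (N M₀)))

end Cont


section Diag
variable {N : Matrix (Fin n) (Fin n) ℂ → ℝ}
  (htri : ∀ X Y, N (X + Y) ≤ N X + N Y)
  (hsmul : ∀ (c : ℂ) X, N (c • X) = ‖c‖ * N X)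
  (hinv : ∀ X, ∀ U ∈ Matrix.unitaryGroup (Fin n) ℂ, ∀ V ∈ Matrix.unitaryGroup (Fin n) ℂ,
      N (U * X * V) = N X)

include hinv in
lemma N_left' {U} (hU : U ∈ Matrix.unitaryGroup (Fin n) ℂ) (M) : N (U * M) = N M := by
  simpa using hinv M U hU 1 (one_mem _)

include hinv in
lemma N_right' {V} (hV : V ∈ Matrix.unitaryGroup (Fin n) ℂ) (M) : N (M * V) = N M := by
  simpa using hinv M 1 (one_mem _) V hV

-- sign diagonal is unitary
lemma sign_diag_unitary (a : Fin n) :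
    (diagonal (fun i => if i = a then (-1:ℂ) else 1)) ∈ Matrix.unitaryGroup (Fin n) ℂ := by
  rw [Matrix.mem_unitaryGroup_iff', Matrix.star_eq_conjTranspose, Matrix.diagonal_conjTranspose,
    Matrix.diagonal_mul_diagonal]
  ext i j
  rcases eq_or_ne i j with rfl | hij
  · by_cases h : i = a <;> simp [h]
  · simp [Matrix.diagonal_apply_ne _ hij, Matrix.one_apply_ne hij]

include htri hsmul hinv in
lemma N_diag_left (f : Fin n → ℝ) (hf : ∀ i, |f i| ≤ 1) (M) :
    N (diagonal (fun i => (f i : ℂ)) * M) ≤ N M := by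
  classical
  have main : ∀ s : Finset (Fin n), ∀ f : Fin n → ℝ, (∀ i, |f i| ≤ 1) →
      (∀ i ∉ s, f i = 1) → N (diagonal (fun i => (f i : ℂ)) * M) ≤ N M := by
    intro s
    induction s using Finset.induction with
    | empty =>
      intro f hf h1
      have : (fun i => (f i : ℂ)) = fun _ => 1 := by
        funext i; rw [h1 i (Finset.notMem_empty i)]; norm_num
      rw [this, Matrix.diagonal_one, one_mul]
    | @insert a s ha ih =>
      intro f hf h1
      set g := Function.update f a 1 with hg
      set h := Function.update f a (-1) with hh
      have hgb : ∀ i, |g i| ≤ 1 := by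
        intro i; by_cases hia : i = a <;> simp [hg, hia, Function.update, hf i]
      have hgs : ∀ i ∉ s, g i = 1 := by
        intro i his
        by_cases hia : i = a
        · simp [hg, hia]
        · have : i ∉ insert a s := by simp [hia, his]
          simp [hg, Function.update, hia, h1 i this]
      set c₁ : ℝ := (1 + f a) / 2 with hc₁
      set c₂ : ℝ := (1 - f a) / 2 with hc₂
      have hfa := hf a
      have hc₁0 : 0 ≤ c₁ := by rw [hc₁]; rw [abs_le] at hfa; linarith
      have hc₂0 : 0 ≤ c₂ := by rw [hc₂]; rw [abs_le] at hfa; linarith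
      have hdecomp : diagonal (fun i => (f i : ℂ)) =
          (c₁ : ℂ) • diagonal (fun i => (g i : ℂ)) + (c₂ : ℂ) • diagonal (fun i => (h i : ℂ)) := by
        ext i j
        rcases eq_or_ne i j with rfl | hij
        · by_cases hia : i = a
          · subst hia
            simp only [hg, hh, Matrix.add_apply, Matrix.smul_apply, Matrix.diagonal_apply_eq,
              Function.update_self, smul_eq_mul]
            rw [hc₁, hc₂]; push_cast; ring
          · simp only [hg, hh, Matrix.add_apply, Matrix.smul_apply, Matrix.diagonal_apply_eq,
              Function.update_of_ne hia, smul_eq_mul]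
            rw [hc₁, hc₂]; push_cast; ring
        · simp [Matrix.diagonal_apply_ne _ hij]
      have hE : diagonal (fun i => (h i : ℂ)) =
          (diagonal (fun i => if i = a then (-1:ℂ) else 1)) * diagonal (fun i => (g i : ℂ)) := by
        rw [Matrix.diagonal_mul_diagonal]
        ext i j
        rcases eq_or_ne i j with rfl | hij
        · by_cases hia : i = a
          · subst hia; simp [hh, hg]
          · simp [hh, hg, Function.update_of_ne hia, hia]
        · simp [Matrix.diagonal_apply_ne _ hij]
      have step1 : N (diagonal (fun i => (f i : ℂ)) * M) ≤
          c₁ * N (diagonal (fun i => (g i : ℂ)) * M) +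
          c₂ * N (diagonal (fun i => (h i : ℂ)) * M) := by
        rw [hdecomp, Matrix.add_mul, Matrix.smul_mul, Matrix.smul_mul]
        refine le_trans (htri _ _) ?_
        rw [hsmul, hsmul]
        simp only [Complex.norm_real, Real.norm_eq_abs, abs_of_nonneg hc₁0, abs_of_nonneg hc₂0]
        exact le_rfl
      have step2 : N (diagonal (fun i => (h i : ℂ)) * M) =
          N (diagonal (fun i => (g i : ℂ)) * M) := by
        rw [hE, mul_assoc]
        exact N_left' hinv (sign_diag_unitary a) _
      have step3 := ih g hgb hgs
      calc N (diagonal (fun i => (f i : ℂ)) * M)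
          ≤ c₁ * N (diagonal (fun i => (g i : ℂ)) * M) +
            c₂ * N (diagonal (fun i => (h i : ℂ)) * M) := step1
        _ = (c₁ + c₂) * N (diagonal (fun i => (g i : ℂ)) * M) := by rw [step2]; ring
        _ = N (diagonal (fun i => (g i : ℂ)) * M) := by
            have : c₁ + c₂ = 1 := by rw [hc₁, hc₂]; ring
            rw [this, one_mul]
        _ ≤ N M := step3
  exact main Finset.univ f hf (fun i hi => absurd (Finset.mem_univ i) hi)

include htri hsmul hinv in
lemma N_diag_right (f : Fin n → ℝ) (hf : ∀ i, |f i| ≤ 1) (M) :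
    N (M * diagonal (fun i => (f i : ℂ))) ≤ N M := by
  classical
  have main : ∀ s : Finset (Fin n), ∀ f : Fin n → ℝ, (∀ i, |f i| ≤ 1) →
      (∀ i ∉ s, f i = 1) → N (M * diagonal (fun i => (f i : ℂ))) ≤ N M := by
    intro s
    induction s using Finset.induction with
    | empty =>
      intro f hf h1
      have : (fun i => (f i : ℂ)) = fun _ => 1 := by
        funext i; rw [h1 i (Finset.notMem_empty i)]; norm_num
      rw [this, Matrix.diagonal_one, mul_one]
    | @insert a s ha ih =>
      intro f hf h1
      set g := Function.update f a 1 with hg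
      set h := Function.update f a (-1) with hh
      have hgb : ∀ i, |g i| ≤ 1 := by
        intro i; by_cases hia : i = a <;> simp [hg, hia, Function.update, hf i]
      have hgs : ∀ i ∉ s, g i = 1 := by
        intro i his
        by_cases hia : i = a
        · simp [hg, hia]
        · have : i ∉ insert a s := by simp [hia, his]
          simp [hg, Function.update, hia, h1 i this]
      set c₁ : ℝ := (1 + f a) / 2 with hc₁
      set c₂ : ℝ := (1 - f a) / 2 with hc₂
      have hfa := hf a
      have hc₁0 : 0 ≤ c₁ := by rw [hc₁]; rw [abs_le] at hfa; linarith
      have hc₂0 : 0 ≤ c₂ := by rw [hc₂]; rw [abs_le] at hfa; linarith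
      have hdecomp : diagonal (fun i => (f i : ℂ)) =
          (c₁ : ℂ) • diagonal (fun i => (g i : ℂ)) + (c₂ : ℂ) • diagonal (fun i => (h i : ℂ)) := by
        ext i j
        rcases eq_or_ne i j with rfl | hij
        · by_cases hia : i = a
          · subst hia
            simp only [hg, hh, Matrix.add_apply, Matrix.smul_apply, Matrix.diagonal_apply_eq,
              Function.update_self, smul_eq_mul]
            rw [hc₁, hc₂]; push_cast; ring
          · simp only [hg, hh, Matrix.add_apply, Matrix.smul_apply, Matrix.diagonal_apply_eq,
              Function.update_of_ne hia, smul_eq_mul]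
            rw [hc₁, hc₂]; push_cast; ring
        · simp [Matrix.diagonal_apply_ne _ hij]
      have hE : diagonal (fun i => (h i : ℂ)) =
          diagonal (fun i => (g i : ℂ)) * (diagonal (fun i => if i = a then (-1:ℂ) else 1)) := by
        rw [Matrix.diagonal_mul_diagonal]
        ext i j
        rcases eq_or_ne i j with rfl | hij
        · by_cases hia : i = a
          · subst hia; simp [hh, hg]
          · simp [hh, hg, Function.update_of_ne hia, hia]
        · simp [Matrix.diagonal_apply_ne _ hij]
      have step1 : N (M * diagonal (fun i => (f i : ℂ))) ≤
          c₁ * N (M * diagonal (fun i => (g i : ℂ))) +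
          c₂ * N (M * diagonal (fun i => (h i : ℂ))) := by
        rw [hdecomp, Matrix.mul_add, Matrix.mul_smul, Matrix.mul_smul]
        refine le_trans (htri _ _) ?_
        rw [hsmul, hsmul]
        simp only [Complex.norm_real, Real.norm_eq_abs, abs_of_nonneg hc₁0, abs_of_nonneg hc₂0]
        exact le_rfl
      have step2 : N (M * diagonal (fun i => (h i : ℂ))) =
          N (M * diagonal (fun i => (g i : ℂ))) := by
        rw [hE, ← mul_assoc]
        exact N_right' hinv (sign_diag_unitary a) _
      have step3 := ih g hgb hgs
      calc N (M * diagonal (fun i => (f i : ℂ)))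
          ≤ c₁ * N (M * diagonal (fun i => (g i : ℂ))) +
            c₂ * N (M * diagonal (fun i => (h i : ℂ))) := step1
        _ = (c₁ + c₂) * N (M * diagonal (fun i => (g i : ℂ))) := by rw [step2]; ring
        _ = N (M * diagonal (fun i => (g i : ℂ))) := by
            have : c₁ + c₂ = 1 := by rw [hc₁, hc₂]; ring
            rw [this, one_mul]
        _ ≤ N M := step3
  exact main Finset.univ f hf (fun i hi => absurd (Finset.mem_univ i) hi)

end Diag


-- eigenvalue upper bound from 1 - P psd
lemma eig_le_one {P : Matrix (Fin n) (Fin n) ℂ} (hP : P.IsHermitian)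
    (h : (1 - P).PosSemidef) (i : Fin n) : hP.eigenvalues i ≤ 1 := by
  have hU := hP.eigenvectorUnitary.2
  set U : Matrix (Fin n) (Fin n) ℂ := (hP.eigenvectorUnitary : Matrix (Fin n) (Fin n) ℂ) with hUdef
  have hUU : star U * U = 1 := Matrix.mem_unitaryGroup_iff'.mp hU
  have hcong : (star U * (1 - P) * U).PosSemidef := by
    have := h.conjTranspose_mul_mul_same (B := U)
    simpa [Matrix.star_eq_conjTranspose] using this
  have hdiag : star U * (1 - P) * U =
      1 - Matrix.diagonal (RCLike.ofReal ∘ hP.eigenvalues) := by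
    conv_lhs => rw [hP.spectral_theorem, Unitary.conjStarAlgAut_apply]
    rw [Matrix.mul_sub, Matrix.sub_mul, mul_one, hUU]
    congr 1
    rw [← mul_assoc, ← mul_assoc, hUU, one_mul, mul_assoc]
    rw [show (star U : Matrix (Fin n) (Fin n) ℂ) * U = 1 from hUU, mul_one]
  rw [hdiag] at hcong
  have h1 : (1 : Matrix (Fin n) (Fin n) ℂ) - Matrix.diagonal (RCLike.ofReal ∘ hP.eigenvalues)
      = Matrix.diagonal (fun j => 1 - (hP.eigenvalues j : ℂ)) := by
    rw [← Matrix.diagonal_one, Matrix.diagonal_sub]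
    rfl
  rw [h1, Matrix.posSemidef_diagonal_iff] at hcong
  have := hcong i
  rw [show ((1 : ℂ) - (hP.eigenvalues i : ℂ)) = ((1 - hP.eigenvalues i : ℝ) : ℂ) by push_cast; ring] at this
  rw [Complex.zero_le_real] at this
  linarith
section Mono
variable {N : Matrix (Fin n) (Fin n) ℂ → ℝ}
  (htri : ∀ X Y, N (X + Y) ≤ N X + N Y)
  (hsmul : ∀ (c : ℂ) X, N (c • X) = ‖c‖ * N X)
  (hinv : ∀ X, ∀ U ∈ Matrix.unitaryGroup (Fin n) ℂ, ∀ V ∈ Matrix.unitaryGroup (Fin n) ℂ,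
      N (U * X * V) = N X)

include htri hsmul hinv in
lemma N_sqrt_left {P : Matrix (Fin n) (Fin n) ℂ} (hP : P.PosSemidef)
    (hle : ∀ i, hP.1.eigenvalues i ≤ 1) (M) : N (hP.sqrt * M) ≤ N M := by
  have hU := hP.1.eigenvectorUnitary.2
  set U : Matrix (Fin n) (Fin n) ℂ := (hP.1.eigenvectorUnitary : Matrix (Fin n) (Fin n) ℂ) with hUdef
  have hsq : hP.sqrt = U * diagonal (fun i => ((Real.sqrt (hP.1.eigenvalues i) : ℝ) : ℂ)) * star U := rfl
  rw [hsq]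
  have h1 : U * diagonal (fun i => ((Real.sqrt (hP.1.eigenvalues i) : ℝ) : ℂ)) * star U * M =
      U * (diagonal (fun i => ((Real.sqrt (hP.1.eigenvalues i) : ℝ) : ℂ)) * (star U * M)) := by
    simp only [mul_assoc]
  rw [h1, N_left' hinv hU]
  refine le_trans (N_diag_left htri hsmul hinv (fun i => Real.sqrt (hP.1.eigenvalues i)) ?_ _) ?_
  · intro i; rw [abs_of_nonneg (Real.sqrt_nonneg _)]; exact Real.sqrt_le_one.mpr (hle i)
  · rw [N_left' hinv (Unitary.star_mem hU)]

include htri hsmul hinv in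
lemma N_sqrt_right {P : Matrix (Fin n) (Fin n) ℂ} (hP : P.PosSemidef)
    (hle : ∀ i, hP.1.eigenvalues i ≤ 1) (M) : N (M * hP.sqrt) ≤ N M := by
  have hU := hP.1.eigenvectorUnitary.2
  set U : Matrix (Fin n) (Fin n) ℂ := (hP.1.eigenvectorUnitary : Matrix (Fin n) (Fin n) ℂ) with hUdef
  have hsq : hP.sqrt = U * diagonal (fun i => ((Real.sqrt (hP.1.eigenvalues i) : ℝ) : ℂ)) * star U := rfl
  rw [hsq]
  have h1 : M * (U * diagonal (fun i => ((Real.sqrt (hP.1.eigenvalues i) : ℝ) : ℂ)) * star U) =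
      ((M * U) * diagonal (fun i => ((Real.sqrt (hP.1.eigenvalues i) : ℝ) : ℂ))) * star U := by
    simp only [mul_assoc]
  rw [h1, N_right' hinv (Unitary.star_mem hU)]
  refine le_trans (N_diag_right htri hsmul hinv (fun i => Real.sqrt (hP.1.eigenvalues i)) ?_ _) ?_
  · intro i; rw [abs_of_nonneg (Real.sqrt_nonneg _)]; exact Real.sqrt_le_one.mpr (hle i)
  · rw [N_right' hinv hU]

include htri hsmul hinv in
lemma N_mono' {A B : Matrix (Fin n) (Fin n) ℂ} (hA : A.PosDef) (hB : B.PosDef)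
    (hAB : (B - A).PosSemidef) : N A ≤ N B := by
  have hBdetU : IsUnit B.det := isUnit_iff_ne_zero.mpr hB.det_pos.ne'
  have hAdet : A.det ≠ 0 := hA.det_pos.ne'
  have hBB' : B * B⁻¹ = 1 := Matrix.mul_nonsing_inv B hBdetU
  have hB'B : B⁻¹ * B = 1 := Matrix.nonsing_inv_mul B hBdetU
  have hBinv : B⁻¹.PosDef := hB.inv
  set Rb := hBinv.posSemidef.sqrt with hRbdef
  have hRb2 : Rb * Rb = B⁻¹ := hBinv.posSemidef.sqrt_mul_self
  have hRbH : Rbᴴ = Rb := hBinv.posSemidef.posSemidef_sqrt.1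
  have hcomm : B * Rb = Rb * B := by
    have h1 : Rb * B⁻¹ = B⁻¹ * Rb := by
      rw [← hRb2]; exact (mul_assoc Rb Rb Rb).symm
    calc B * Rb = B * Rb * (B⁻¹ * B) := by rw [hB'B, mul_one]
      _ = B * (Rb * B⁻¹) * B := by rw [← mul_assoc, mul_assoc B Rb B⁻¹]
      _ = B * (B⁻¹ * Rb) * B := by rw [h1]
      _ = Rb * B := by rw [← mul_assoc, hBB', one_mul]
  have hRbBRb : Rb * B * Rb = 1 := by
    calc Rb * B * Rb = (B * Rb) * Rb := by rw [hcomm]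
      _ = B * (Rb * Rb) := by rw [mul_assoc]
      _ = 1 := by rw [hRb2, hBB']
  set Ra := hA.posSemidef.sqrt with hRadef
  have hRa2 : Ra * Ra = A := hA.posSemidef.sqrt_mul_self
  have hRaH : Raᴴ = Ra := hA.posSemidef.posSemidef_sqrt.1
  set C := Ra * Rb with hCdef
  have hCH : Cᴴ = Rb * Ra := by rw [hCdef, Matrix.conjTranspose_mul, hRbH, hRaH]
  have hCBC : C * B * Cᴴ = A := by
    rw [hCH, hCdef]
    calc Ra * Rb * B * (Rb * Ra) = Ra * (Rb * B * Rb) * Ra := by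
          simp only [mul_assoc]
      _ = Ra * Ra := by rw [hRbBRb, mul_one]
      _ = A := hRa2
  set P := Cᴴ * C with hPdef
  have hP : P.PosSemidef := Matrix.posSemidef_conjTranspose_mul_self C
  have hPeq : P = Rb * A * Rb := by
    rw [hPdef, hCH, hCdef]
    calc Rb * Ra * (Ra * Rb) = Rb * (Ra * Ra) * Rb := by simp only [mul_assoc]
      _ = Rb * A * Rb := by rw [hRa2]
  have h1P : (1 - P).PosSemidef := by
    have hcong := hAB.mul_mul_conjTranspose_same Rb
    have : Rb * (B - A) * Rbᴴ = 1 - P := by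
      rw [hRbH, Matrix.mul_sub, Matrix.sub_mul, hRbBRb, hPeq]
    rwa [this] at hcong
  have hdetRb : Rb.det ≠ 0 := by
    intro h
    have : B⁻¹.det = 0 := by rw [← hRb2, Matrix.det_mul, h, mul_zero]
    exact hBinv.det_pos.ne' this
  have hdetP : P.det ≠ 0 := by
    rw [hPeq, Matrix.det_mul, Matrix.det_mul]
    exact mul_ne_zero (mul_ne_zero hdetRb hAdet) hdetRb
  set Q := hP.sqrt with hQdef
  have hQ2 : Q * Q = P := hP.sqrt_mul_self
  have hQH : Qᴴ = Q := hP.posSemidef_sqrt.1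
  have hdetQ : IsUnit Q.det := by
    refine isUnit_iff_ne_zero.mpr fun h => hdetP ?_
    rw [← hQ2, Matrix.det_mul, h, mul_zero]
  have hQ'Q : Q⁻¹ * Q = 1 := Matrix.nonsing_inv_mul Q hdetQ
  have hQQ' : Q * Q⁻¹ = 1 := Matrix.mul_nonsing_inv Q hdetQ
  set W := C * Q⁻¹ with hWdef
  have hWH : Wᴴ = Q⁻¹ * Cᴴ := by
    rw [hWdef, Matrix.conjTranspose_mul, Matrix.conjTranspose_nonsing_inv, hQH]
  have hW : W ∈ Matrix.unitaryGroup (Fin n) ℂ := by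
    rw [Matrix.mem_unitaryGroup_iff', Matrix.star_eq_conjTranspose, hWH, hWdef]
    calc Q⁻¹ * Cᴴ * (C * Q⁻¹) = Q⁻¹ * (Cᴴ * C) * Q⁻¹ := by simp only [mul_assoc]
      _ = Q⁻¹ * (Q * Q) * Q⁻¹ := by rw [← hPdef, ← hQ2]
      _ = (Q⁻¹ * Q) * (Q * Q⁻¹) := by simp only [mul_assoc]
      _ = 1 := by rw [hQ'Q, hQQ', one_mul]
  have hCWQ : C = W * Q := by
    rw [hWdef, mul_assoc, hQ'Q, mul_one]
  have hWHmem : Wᴴ ∈ Matrix.unitaryGroup (Fin n) ℂ := by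
    rw [← Matrix.star_eq_conjTranspose]; exact Unitary.star_mem hW
  have heig1 : ∀ i, hP.1.eigenvalues i ≤ 1 := fun i => eig_le_one hP.1 h1P i
  calc N A = N (C * B * Cᴴ) := by rw [hCBC]
    _ = N (W * (Q * B * Q) * Wᴴ) := by
        rw [hCWQ, Matrix.conjTranspose_mul, hQH]
        simp only [mul_assoc]
    _ = N (Q * B * Q) := hinv _ W hW Wᴴ hWHmem
    _ = N (Q * (B * Q)) := by rw [mul_assoc]
    _ ≤ N (B * Q) := N_sqrt_left htri hsmul hinv hP heig1 _
    _ ≤ N B := N_sqrt_right htri hsmul hinv hP heig1 _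

include htri hsmul hinv in
lemma N_mono {A B : Matrix (Fin n) (Fin n) ℂ} (hA : A.PosSemidef) (hB : B.PosSemidef)
    (hAB : (B - A).PosSemidef) : N A ≤ N B := by
  refine le_of_forall_pos_le_add fun ε hε => ?_
  set c := N (1 : Matrix (Fin n) (Fin n) ℂ) with hc
  have hc0 : 0 ≤ c := N_nonneg htri hsmul _
  set δ : ℝ := ε / (2 * c + 1) with hδdef
  have hδ : 0 < δ := div_pos hε (by linarith)
  have hδ1 : ((δ : ℂ) • (1 : Matrix (Fin n) (Fin n) ℂ)).PosDef := by
    rw [Matrix.smul_one_eq_diagonal]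
    exact Matrix.posDef_diagonal_iff.mpr fun i => Complex.zero_lt_real.mpr hδ
  have hA' : (A + (δ : ℂ) • 1).PosDef := Matrix.PosDef.posSemidef_add hA hδ1
  have hB' : (B + (δ : ℂ) • 1).PosDef := Matrix.PosDef.posSemidef_add hB hδ1
  have hAB' : ((B + (δ : ℂ) • 1) - (A + (δ : ℂ) • 1)).PosSemidef := by
    have : (B + (δ : ℂ) • 1) - (A + (δ : ℂ) • 1) = B - A := by abel
    rw [this]; exact hAB
  have hnδ : ‖(δ : ℂ)‖ = δ := by
    rw [Complex.norm_real, Real.norm_eq_abs, abs_of_pos hδ]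
  have step1 : N A ≤ N (A + (δ : ℂ) • 1) + δ * c := by
    have h1 := htri (A + (δ : ℂ) • 1) ((-(δ : ℂ)) • 1)
    have h2 : A + (δ : ℂ) • 1 + ((-(δ : ℂ)) • 1) = A := by
      rw [add_assoc, ← add_smul]
      simp
    rw [h2] at h1
    have h3 : N ((-(δ : ℂ)) • (1 : Matrix (Fin n) (Fin n) ℂ)) = δ * c := by
      rw [hsmul, norm_neg, hnδ, hc]
    rw [h3] at h1
    exact h1
  have step2 : N (A + (δ : ℂ) • 1) ≤ N (B + (δ : ℂ) • 1) :=
    N_mono' htri hsmul hinv hA' hB' hAB'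
  have step3 : N (B + (δ : ℂ) • 1) ≤ N B + δ * c := by
    have h1 := htri B ((δ : ℂ) • 1)
    rw [hsmul, hnδ, ← hc] at h1
    exact h1
  have hδc : δ * (2 * c) ≤ ε := by
    rw [hδdef]
    rw [div_mul_eq_mul_div, div_le_iff₀ (by linarith : (0:ℝ) < 2 * c + 1)]
    nlinarith
  linarith

end Mono
section Half
variable {N : Matrix (Fin n) (Fin n) ℂ → ℝ}
  (htri : ∀ X Y, N (X + Y) ≤ N X + N Y)
  (hsmul : ∀ (c : ℂ) X, N (c • X) = ‖c‖ * N X)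
  (hinv : ∀ X, ∀ U ∈ Matrix.unitaryGroup (Fin n) ℂ, ∀ V ∈ Matrix.unitaryGroup (Fin n) ℂ,
      N (U * X * V) = N X)

include htri hsmul hinv in
lemma N_half' (X Y : Matrix (Fin n) (Fin n) ℂ) (hU : IsUnit (Xᴴ * Y).det) :
    N (Xᴴ * Y) ≤ (N (Xᴴ * X) + N (Yᴴ * Y)) / 2 := by
  set A₀ := Xᴴ * Y with hA₀def
  have hPsd : (A₀ᴴ * A₀).PosSemidef := Matrix.posSemidef_conjTranspose_mul_self A₀
  set P := hPsd.sqrt with hPdef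
  have hP2 : P * P = A₀ᴴ * A₀ := hPsd.sqrt_mul_self
  have hPpsd : P.PosSemidef := hPsd.posSemidef_sqrt
  have hPH : Pᴴ = P := hPpsd.1
  have hdetP : IsUnit P.det := by
    refine isUnit_iff_ne_zero.mpr fun h => ?_
    have h0 : (A₀ᴴ * A₀).det = 0 := by rw [← hP2, Matrix.det_mul, h, mul_zero]
    rw [Matrix.det_mul, Matrix.det_conjTranspose] at h0
    rcases mul_eq_zero.mp h0 with h1 | h1
    · exact hU.ne_zero (by simpa using congrArg star h1)
    · exact hU.ne_zero h1
  have hP'P : P⁻¹ * P = 1 := Matrix.nonsing_inv_mul P hdetP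
  have hPP' : P * P⁻¹ = 1 := Matrix.mul_nonsing_inv P hdetP
  set W := A₀ * P⁻¹ with hWdef
  have hWH : Wᴴ = P⁻¹ * A₀ᴴ := by
    rw [hWdef, Matrix.conjTranspose_mul, Matrix.conjTranspose_nonsing_inv, hPH]
  have hW : W ∈ Matrix.unitaryGroup (Fin n) ℂ := by
    rw [Matrix.mem_unitaryGroup_iff', Matrix.star_eq_conjTranspose, hWH, hWdef]
    calc P⁻¹ * A₀ᴴ * (A₀ * P⁻¹) = P⁻¹ * (A₀ᴴ * A₀) * P⁻¹ := by simp only [mul_assoc]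
      _ = P⁻¹ * (P * P) * P⁻¹ := by rw [hP2]
      _ = (P⁻¹ * P) * (P * P⁻¹) := by simp only [mul_assoc]
      _ = 1 := by rw [hP'P, hPP', one_mul]
  have hWHmem : Wᴴ ∈ Matrix.unitaryGroup (Fin n) ℂ := by
    rw [← Matrix.star_eq_conjTranspose]; exact Unitary.star_mem hW
  have hA₀W : A₀ = W * P := by rw [hWdef, mul_assoc, hP'P, mul_one]
  have hNA₀ : N A₀ = N P := by rw [hA₀W, N_left' hinv hW]
  set Z := X * W with hZdef
  have hZY : Zᴴ * Y = P := by
    rw [hZdef, Matrix.conjTranspose_mul]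
    calc Wᴴ * Xᴴ * Y = Wᴴ * A₀ := by rw [mul_assoc, ← hA₀def]
      _ = P⁻¹ * (A₀ᴴ * A₀) := by rw [hWH, mul_assoc]
      _ = P⁻¹ * (P * P) := by rw [hP2]
      _ = P := by rw [← mul_assoc, hP'P, one_mul]
  have hYZ : Yᴴ * Z = P := by
    have := congrArg Matrix.conjTranspose hZY
    rwa [Matrix.conjTranspose_mul, Matrix.conjTranspose_conjTranspose, hPH] at this
  have h2P : (2 : ℂ) • P = Zᴴ * Y + Yᴴ * Z := by
    rw [two_smul]
    congr 1
    · exact hZY.symm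
    · exact hYZ.symm
  have hDm : (Zᴴ * Z + Yᴴ * Y) - (2 : ℂ) • P = (Z - Y)ᴴ * (Z - Y) := by
    rw [h2P, Matrix.conjTranspose_sub, Matrix.sub_mul, Matrix.mul_sub, Matrix.mul_sub]
    abel
  have hS : (Zᴴ * Z + Yᴴ * Y).PosSemidef :=
    (Matrix.posSemidef_conjTranspose_mul_self Z).add (Matrix.posSemidef_conjTranspose_mul_self Y)
  have h2Ppsd : ((2 : ℂ) • P).PosSemidef := by
    rw [two_smul]; exact hPpsd.add hPpsd
  have hdiff : ((Zᴴ * Z + Yᴴ * Y) - (2 : ℂ) • P).PosSemidef := by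
    rw [hDm]; exact Matrix.posSemidef_conjTranspose_mul_self _
  have hmono := N_mono htri hsmul hinv h2Ppsd hS hdiff
  have h2NP : N ((2 : ℂ) • P) = 2 * N P := by
    rw [hsmul]; norm_num
  have hZZ : Zᴴ * Z = Wᴴ * (Xᴴ * X) * W := by
    rw [hZdef, Matrix.conjTranspose_mul]; simp only [mul_assoc]
  have hNZZ : N (Zᴴ * Z) = N (Xᴴ * X) := by
    rw [hZZ]; exact hinv _ Wᴴ hWHmem W hW
  have htr := htri (Zᴴ * Z) (Yᴴ * Y)
  rw [hNZZ] at htr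
  rw [hNA₀]
  rw [h2NP] at hmono
  linarith

end Half
section Final
variable {N : Matrix (Fin n) (Fin n) ℂ → ℝ}
  (htri : ∀ X Y, N (X + Y) ≤ N X + N Y)
  (hsmul : ∀ (c : ℂ) X, N (c • X) = ‖c‖ * N X)
  (hinv : ∀ X, ∀ U ∈ Matrix.unitaryGroup (Fin n) ℂ, ∀ V ∈ Matrix.unitaryGroup (Fin n) ℂ,
      N (U * X * V) = N X)

lemma isUnit_perturb {X : Matrix (Fin n) (Fin n) ℂ} {t : ℝ}
    (h : (-(t : ℂ)) ∉ spectrum ℂ X) : IsUnit (X + (t : ℂ) • 1) := by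
  have h1 := spectrum.notMem_iff.mp h
  have h2 : (algebraMap ℂ (Matrix (Fin n) (Fin n) ℂ)) (-(t : ℂ)) - X
      = -(X + (t : ℂ) • 1) := by
    rw [Algebra.algebraMap_eq_smul_one]
    rw [neg_smul]
    abel
  rw [h2] at h1
  have := h1.neg
  rwa [neg_neg] at this
  
include htri hsmul hinv in
lemma N_half (X Y : Matrix (Fin n) (Fin n) ℂ) :
    N (Xᴴ * Y) ≤ (N (Xᴴ * X) + N (Yᴴ * Y)) / 2 := by
  classical
  set S : Set ℝ := {t : ℝ | (-(t : ℂ)) ∈ spectrum ℂ X ∨ (-(t : ℂ)) ∈ spectrum ℂ Y} with hSdef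
  have hSfin : S.Finite := by
    have h1 : S ⊆ (fun t : ℝ => (-(t : ℂ))) ⁻¹' (spectrum ℂ X ∪ spectrum ℂ Y) := by
      intro t ht; exact ht
    refine Set.Finite.subset (Set.Finite.preimage ?_ (X.finite_spectrum.union Y.finite_spectrum)) h1
    intro a _ b _ hab
    have := neg_injective hab
    exact_mod_cast this
  have hex : ∀ k : ℕ, ∃ t : ℝ, t ∈ Set.Ioo 0 (1 / ((k : ℝ) + 1)) ∧ t ∉ S := by
    intro k
    have hio : (Set.Ioo (0 : ℝ) (1 / ((k : ℝ) + 1))).Infinite :=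
      Set.Ioo_infinite (by positivity)
    rcases (hio.diff hSfin).nonempty with ⟨t, ht⟩
    exact ⟨t, ht.1, ht.2⟩
  choose u hu1 hu2 using hex
  have hu0 : Filter.Tendsto u Filter.atTop (nhds 0) := by
    refine squeeze_zero (fun k => (hu1 k).1.le) (fun k => (hu1 k).2.le) ?_
    exact tendsto_one_div_add_atTop_nhds_zero_nat
  have key : ∀ k : ℕ, N ((X + ((u k : ℝ) : ℂ) • 1)ᴴ * (Y + ((u k : ℝ) : ℂ) • 1)) ≤
      (N ((X + ((u k : ℝ) : ℂ) • 1)ᴴ * (X + ((u k : ℝ) : ℂ) • 1)) +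
       N ((Y + ((u k : ℝ) : ℂ) • 1)ᴴ * (Y + ((u k : ℝ) : ℂ) • 1))) / 2 := by
    intro k
    have hns := hu2 k
    simp only [hSdef, Set.mem_setOf_eq, not_or] at hns
    have hXu : IsUnit (X + ((u k : ℝ) : ℂ) • 1) := isUnit_perturb hns.1
    have hYu : IsUnit (Y + ((u k : ℝ) : ℂ) • 1) := isUnit_perturb hns.2
    refine N_half' htri hsmul hinv _ _ ?_
    rw [Matrix.det_mul, Matrix.det_conjTranspose]
    exact (((Matrix.isUnit_iff_isUnit_det _).mp hXu).star).mul
      ((Matrix.isUnit_iff_isUnit_det _).mp hYu)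
  have hNc : Continuous N := N_cont htri hsmul
  have hXc : Continuous (fun t : ℝ => X + (t : ℂ) • (1 : Matrix (Fin n) (Fin n) ℂ)) :=
    continuous_const.add (Complex.continuous_ofReal.smul continuous_const)
  have hYc : Continuous (fun t : ℝ => Y + (t : ℂ) • (1 : Matrix (Fin n) (Fin n) ℂ)) :=
    continuous_const.add (Complex.continuous_ofReal.smul continuous_const)
  have hFc : Continuous (fun t : ℝ =>
      N ((X + (t : ℂ) • 1)ᴴ * (Y + (t : ℂ) • 1))) :=
    hNc.comp ((hXc.matrix_conjTranspose).matrix_mul hYc)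
  have hGc : Continuous (fun t : ℝ =>
      N ((X + (t : ℂ) • 1)ᴴ * (X + (t : ℂ) • 1))) :=
    hNc.comp ((hXc.matrix_conjTranspose).matrix_mul hXc)
  have hHc : Continuous (fun t : ℝ =>
      N ((Y + (t : ℂ) • 1)ᴴ * (Y + (t : ℂ) • 1))) :=
    hNc.comp ((hYc.matrix_conjTranspose).matrix_mul hYc)
  have hlim1 : Filter.Tendsto (fun k => N ((X + ((u k : ℝ) : ℂ) • 1)ᴴ * (Y + ((u k : ℝ) : ℂ) • 1)))
      Filter.atTop (nhds (N (Xᴴ * Y))) := by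
    have := (hFc.tendsto 0).comp hu0
    simpa [Function.comp_def] using this
  have hlim2 : Filter.Tendsto (fun k => N ((X + ((u k : ℝ) : ℂ) • 1)ᴴ * (X + ((u k : ℝ) : ℂ) • 1)))
      Filter.atTop (nhds (N (Xᴴ * X))) := by
    have := (hGc.tendsto 0).comp hu0
    simpa [Function.comp_def] using this
  have hlim3 : Filter.Tendsto (fun k => N ((Y + ((u k : ℝ) : ℂ) • 1)ᴴ * (Y + ((u k : ℝ) : ℂ) • 1)))
      Filter.atTop (nhds (N (Yᴴ * Y))) := by
    have := (hHc.tendsto 0).comp hu0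
    simpa [Function.comp_def] using this
  exact le_of_tendsto_of_tendsto' hlim1 ((hlim2.add hlim3).div_const 2) key

end Final

/-- Cauchy–Schwarz inequality for unitarily invariant norms:
`‖X*Y‖ ≤ ‖X*X‖^{1/2} ‖Y*Y‖^{1/2}`. -/
theorem stmt9 {n : ℕ} (N : Matrix (Fin n) (Fin n) ℂ → ℝ)
    (htri : ∀ X Y, N (X + Y) ≤ N X + N Y)
    (hsmul : ∀ (c : ℂ) X, N (c • X) = ‖c‖ * N X)
    (hdef : ∀ X, N X = 0 ↔ X = 0)
    (hinv : ∀ X, ∀ U ∈ Matrix.unitaryGroup (Fin n) ℂ, ∀ V ∈ Matrix.unitaryGroup (Fin n) ℂ,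
      N (U * X * V) = N X)
    (X Y : Matrix (Fin n) (Fin n) ℂ) :
    N (Xᴴ * Y) ≤ Real.sqrt (N (Xᴴ * X)) * Real.sqrt (N (Yᴴ * Y)) := by
  have hXX0 : 0 ≤ N (Xᴴ * X) := N_nonneg htri hsmul _
  have hYY0 : 0 ≤ N (Yᴴ * Y) := N_nonneg htri hsmul _
  by_cases hX : N (Xᴴ * X) = 0
  · have hX0 : X = 0 := Matrix.conjTranspose_mul_self_eq_zero.mp ((hdef _).mp hX)
    rw [hX0]
    rw [Matrix.conjTranspose_zero, Matrix.zero_mul, N_zero hsmul]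
    exact mul_nonneg (Real.sqrt_nonneg _) (Real.sqrt_nonneg _)
  by_cases hY : N (Yᴴ * Y) = 0
  · have hY0 : Y = 0 := Matrix.conjTranspose_mul_self_eq_zero.mp ((hdef _).mp hY)
    rw [hY0]
    rw [Matrix.mul_zero, N_zero hsmul]
    exact mul_nonneg (Real.sqrt_nonneg _) (Real.sqrt_nonneg _)
  set a : ℝ := Real.sqrt (N (Xᴴ * X)) with hadef
  set b : ℝ := Real.sqrt (N (Yᴴ * Y)) with hbdef
  have ha : 0 < a := Real.sqrt_pos.mpr (lt_of_le_of_ne hXX0 (Ne.symm hX))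
  have hb : 0 < b := Real.sqrt_pos.mpr (lt_of_le_of_ne hYY0 (Ne.symm hY))
  have ha2 : a ^ 2 = N (Xᴴ * X) := Real.sq_sqrt hXX0
  have hb2 : b ^ 2 = N (Yᴴ * Y) := Real.sq_sqrt hYY0
  set s : ℝ := Real.sqrt (b / a) with hsdef
  have hs : 0 < s := Real.sqrt_pos.mpr (div_pos hb ha)
  have hs2 : s ^ 2 = b / a := Real.sq_sqrt (div_pos hb ha).le
  have key := N_half htri hsmul hinv ((s : ℂ) • X) (((s⁻¹ : ℝ) : ℂ) • Y)
  have e1 : ((s : ℂ) • X)ᴴ * (((s⁻¹ : ℝ) : ℂ) • Y) = Xᴴ * Y := by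
    rw [Matrix.conjTranspose_smul, Matrix.smul_mul, Matrix.mul_smul, smul_smul]
    rw [show (star (s : ℂ)) = (s : ℂ) by simp [Complex.conj_ofReal]]
    rw [show ((s : ℂ) * ((s⁻¹ : ℝ) : ℂ)) = 1 by
      push_cast; rw [mul_inv_cancel₀]; exact_mod_cast hs.ne']
    rw [one_smul]
  have e2 : N (((s : ℂ) • X)ᴴ * ((s : ℂ) • X)) = s ^ 2 * N (Xᴴ * X) := by
    rw [Matrix.conjTranspose_smul, Matrix.smul_mul, Matrix.mul_smul, smul_smul]
    rw [show (star (s : ℂ)) = (s : ℂ) by simp [Complex.conj_ofReal]]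
    rw [hsmul]
    rw [show ‖(s : ℂ) * (s : ℂ)‖ = s ^ 2 by
      rw [norm_mul, Complex.norm_real, Real.norm_eq_abs, abs_of_pos hs]; ring]
  have e3 : N ((((s⁻¹ : ℝ) : ℂ) • Y)ᴴ * (((s⁻¹ : ℝ) : ℂ) • Y)) = (s⁻¹) ^ 2 * N (Yᴴ * Y) := by
    rw [Matrix.conjTranspose_smul, Matrix.smul_mul, Matrix.mul_smul, smul_smul]
    rw [show (star ((s⁻¹ : ℝ) : ℂ)) = ((s⁻¹ : ℝ) : ℂ) by simp [Complex.conj_ofReal]]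
    rw [hsmul]
    rw [show ‖((s⁻¹ : ℝ) : ℂ) * ((s⁻¹ : ℝ) : ℂ)‖ = (s⁻¹) ^ 2 by
      rw [norm_mul, Complex.norm_real, Real.norm_eq_abs, abs_of_pos (by positivity)]; ring]
  rw [e1, e2, e3] at key
  have hv1 : s ^ 2 * N (Xᴴ * X) = a * b := by
    rw [hs2, ← ha2]
    field_simp
  have hv2 : (s⁻¹) ^ 2 * N (Yᴴ * Y) = a * b := by
    rw [inv_pow, hs2, ← hb2]
    field_simp
  rw [hv1, hv2] at key
  linarith
end

section
/- If ‖·‖ is a unitarily invariant norm on M_n(ℂ), then X ↦ ‖X*X‖^{1/2} is also a norm on M_n(ℂ), and it is unitarily invariant. -/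
open Matrix
open scoped ComplexOrder

variable {n : ℕ}

lemma aux_posDef_conjTranspose_mul_self (C : Matrix (Fin n) (Fin n) ℂ) (hC : IsUnit C) :
    (Cᴴ * C).PosDef := by
  refine PosDef.of_dotProduct_mulVec_pos (posSemidef_conjTranspose_mul_self C).1 fun x hx => ?_
  have hinj := Matrix.mulVec_injective_iff_isUnit.mpr hC
  have hxC : C *ᵥ x ≠ 0 := by
    intro h
    apply hx
    have h0 : C *ᵥ x = C *ᵥ 0 := by simpa using h
    exact hinj h0
  have heq : star x ⬝ᵥ ((Cᴴ * C) *ᵥ x) = star (C *ᵥ x) ⬝ᵥ (C *ᵥ x) := by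
    rw [← mulVec_mulVec, dotProduct_mulVec, ← star_mulVec]
  rw [heq]
  exact dotProduct_star_self_pos_iff.mpr hxC

open scoped MatrixOrder in
lemma aux_sqrt_isUnit {B : Matrix (Fin n) (Fin n) ℂ} (hB : B.PosDef) :
    IsUnit (CFC.sqrt B) := by
  set Q := CFC.sqrt B with hQ
  have h : Q * Q = B := CFC.sqrt_mul_sqrt_self B hB.posSemidef.nonneg
  have hu : IsUnit (Q * Q) := h ▸ hB.isUnit
  rw [isUnit_iff_isUnit_det] at hu ⊢
  rw [det_mul] at hu
  exact (IsUnit.mul_iff.mp hu).1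

section
variable (N : Matrix (Fin n) (Fin n) ℂ → ℝ)

open scoped MatrixOrder in
set_option maxHeartbeats 1000000 in
lemma aux_mono_pd
    (htri : ∀ X Y, N (X + Y) ≤ N X + N Y)
    (hsmul : ∀ (c : ℂ) X, N (c • X) = ‖c‖ * N X)
    (hinv : ∀ X, ∀ U ∈ Matrix.unitaryGroup (Fin n) ℂ, ∀ V ∈ Matrix.unitaryGroup (Fin n) ℂ,
      N (U * X * V) = N X)
    {A B : Matrix (Fin n) (Fin n) ℂ} (hA : A.PosDef) (hB : B.PosDef)
    (hBA : (B - A).PosSemidef) : N A ≤ N B := by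
  classical
  -- square roots
  set R := CFC.sqrt B with hRdef
  have hRR : R * R = B := CFC.sqrt_mul_sqrt_self B hB.posSemidef.nonneg
  have hRH : Rᴴ = R := (CFC.sqrt_nonneg B).posSemidef.1
  have hRu : IsUnit R := aux_sqrt_isUnit hB
  set S := R⁻¹ with hSdef
  have hRS : R * S = 1 := mul_nonsing_inv _ ((isUnit_iff_isUnit_det _).mp hRu)
  have hSR : S * R = 1 := nonsing_inv_mul _ ((isUnit_iff_isUnit_det _).mp hRu)
  have hSH : Sᴴ = S := by rw [hSdef, conjTranspose_nonsing_inv, hRH]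
  have hSu : IsUnit S := isUnit_nonsing_inv_iff.mpr hRu
  have hSBS : S * B * S = 1 := by
    rw [← hRR, show S * (R * R) * S = (S * R) * (R * S) by noncomm_ring, hSR, hRS, one_mul]
  set Q := CFC.sqrt A with hQdef
  have hQQ : Q * Q = A := CFC.sqrt_mul_sqrt_self A hA.posSemidef.nonneg
  have hQH : Qᴴ = Q := (CFC.sqrt_nonneg A).posSemidef.1
  have hQu : IsUnit Q := aux_sqrt_isUnit hA
  set C := Q * S with hCdef
  have hCH : Cᴴ = S * Q := by rw [hCdef, conjTranspose_mul, hSH, hQH]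
  have hCu : IsUnit C := hQu.mul hSu
  have hCBC : C * B * Cᴴ = A := by
    rw [hCH, hCdef, show Q * S * B * (S * Q) = Q * (S * B * S) * Q by noncomm_ring, hSBS, mul_one, hQQ]
  set H := Cᴴ * C with hHdef
  have hH : H.PosDef := aux_posDef_conjTranspose_mul_self C hCu
  have hHSAS : H = S * A * S := by
    rw [hHdef, hCH, hCdef, ← hQQ]; noncomm_ring
  have h1H : (1 - H).PosSemidef := by
    have := hBA.conjTranspose_mul_mul_same S
    rw [hSH] at this
    have heq : S * (B - A) * S = 1 - H := by
      rw [mul_sub, sub_mul, hSBS, hHSAS]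
    rwa [heq] at this
  -- spectral theorem for H
  have hHer : H.IsHermitian := hH.1
  set V : Matrix (Fin n) (Fin n) ℂ := (hHer.eigenvectorUnitary : Matrix (Fin n) (Fin n) ℂ)
    with hVdef
  have hVmem : V ∈ Matrix.unitaryGroup (Fin n) ℂ := hHer.eigenvectorUnitary.2
  have hVV : V * star V = 1 := (mem_unitaryGroup_iff).mp hVmem
  have hVV' : star V * V = 1 := (mem_unitaryGroup_iff').mp hVmem
  set μ : Fin n → ℝ := hHer.eigenvalues with hμdef
  have hspec : star V * H * V = diagonal (RCLike.ofReal ∘ μ) :=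
    (Unitary.conjStarAlgAut_star_apply (S := ℂ) _ _).symm.trans
      hHer.conjStarAlgAut_star_eigenvectorUnitary
  have hμpos : ∀ i, 0 < μ i := hH.eigenvalues_pos
  have hμle1 : ∀ i, μ i ≤ 1 := by
    have hps : (star V * (1 - H) * V).PosSemidef := by
      have := h1H.conjTranspose_mul_mul_same V
      rwa [← star_eq_conjTranspose] at this
    have heq : star V * (1 - H) * V = diagonal (fun i => 1 - (RCLike.ofReal ∘ μ) i) := by
      rw [mul_sub, sub_mul, mul_one, hVV', hspec, ← diagonal_one, diagonal_sub]
    rw [heq] at hps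
    intro i
    have hd := posSemidef_diagonal_iff.mp hps i
    have h2 : (0:ℂ) ≤ ((1 - μ i : ℝ) : ℂ) := by
      push_cast
      simpa using hd
    rw [Complex.zero_le_real] at h2
    linarith
  -- the collapsing lemma for conjugated diagonals
  have key : ∀ D₁ D₂ : Fin n → ℂ,
      (V * diagonal D₁ * star V) * (V * diagonal D₂ * star V)
        = V * diagonal (fun i => D₁ i * D₂ i) * star V := by
    intro D₁ D₂
    have h1 : (V * diagonal D₁ * star V) * (V * diagonal D₂ * star V)
        = V * (diagonal D₁ * ((star V * V) * (diagonal D₂ * star V))) := by noncomm_ring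
    rw [h1, hVV', one_mul, ← mul_assoc (diagonal D₁), diagonal_mul_diagonal, ← mul_assoc,
      mul_assoc V]
  have hspec' : H = V * diagonal (RCLike.ofReal ∘ μ) * star V := by
    have := hHer.spectral_theorem
    rw [hVdef]
    convert this using 3
    exact (Unitary.conjStarAlgAut_apply (S := ℂ) _ _).symm
  have hof : ∀ r : ℝ, (RCLike.ofReal r : ℂ) = (r : ℂ) := fun r => rfl
  -- ingredients
  set a : Fin n → ℝ := fun i => Real.sqrt (μ i) with hadef
  have ha_pos : ∀ i, 0 < a i := fun i => Real.sqrt_pos.mpr (hμpos i)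
  set b : Fin n → ℝ := fun i => Real.sqrt (1 - μ i) with hbdef
  set e : Fin n → ℂ := fun i => (a i : ℂ) + (b i : ℂ) * Complex.I with hedef
  have h_e_unit : ∀ i, star (e i) * e i = 1 := by
    intro i
    rw [mul_comm, show star (e i) = (starRingEnd ℂ) (e i) from rfl, Complex.mul_conj, hedef]
    rw [Complex.normSq_add_mul_I]
    rw [hadef, hbdef]
    simp only
    rw [Real.sq_sqrt (hμpos i).le, Real.sq_sqrt (by linarith [hμle1 i])]
    norm_num
  have h_e_unit' : ∀ i, e i * star (e i) = 1 := fun i => by rw [mul_comm]; exact h_e_unit i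
  set g : Fin n → ℂ := fun i => (((a i)⁻¹ : ℝ) : ℂ) with hgdef
  have hg_star : (star g : Fin n → ℂ) = g := by
    funext i
    simp [hgdef]
  set G := V * diagonal g * star V with hGdef
  have hGstar : star G = G := by
    rw [hGdef, Matrix.star_mul, Matrix.star_mul, star_star]
    rw [show star (diagonal g) = diagonal (star g) by
      rw [star_eq_conjTranspose, diagonal_conjTranspose]]
    rw [hg_star, mul_assoc]
  set W := C * G with hWdef
  have hWmem : W ∈ Matrix.unitaryGroup (Fin n) ℂ := by
    rw [mem_unitaryGroup_iff']
    have h1 : star W * W = G * (H * G) := by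
      rw [hWdef, Matrix.star_mul, hGstar, hHdef, ← star_eq_conjTranspose]; noncomm_ring
    rw [h1, ← mul_assoc, hGdef, hspec', key, key]
    have : (fun i => (fun i => g i * (RCLike.ofReal ∘ μ) i) i * g i) = fun _ => (1:ℂ) := by
      funext i
      simp only [Function.comp_apply, hof, hgdef]
      push_cast
      rw [show ((a i:ℂ))⁻¹ * (μ i:ℂ) * ((a i:ℂ))⁻¹ = (μ i:ℂ) * (((a i:ℂ)) * ((a i:ℂ)))⁻¹ by
        rw [mul_inv]; ring]
      rw [show ((a i:ℂ)) * ((a i:ℂ)) = ((a i * a i : ℝ) : ℂ) by push_cast; ring]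
      rw [hadef]
      simp only
      rw [Real.mul_self_sqrt (hμpos i).le]
      rw [show ((μ i:ℝ):ℂ) * (((μ i:ℝ):ℂ))⁻¹ = 1 from
        mul_inv_cancel₀ (by exact_mod_cast (hμpos i).ne')]
    rw [this, diagonal_one, mul_one, hVV]
  have hdiagE : diagonal e ∈ Matrix.unitaryGroup (Fin n) ℂ := by
    rw [mem_unitaryGroup_iff']
    rw [star_eq_conjTranspose, diagonal_conjTranspose, diagonal_mul_diagonal]
    have : (fun i => (star e) i * e i) = fun _ => (1:ℂ) := funext fun i => h_e_unit i
    rw [this, diagonal_one]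
  have hdiagE' : diagonal (star e) ∈ Matrix.unitaryGroup (Fin n) ℂ := by
    rw [mem_unitaryGroup_iff']
    rw [star_eq_conjTranspose, diagonal_conjTranspose, diagonal_mul_diagonal]
    have : (fun i => (star (star e)) i * (star e) i) = fun _ => (1:ℂ) := by
      funext i
      simp only [Pi.star_apply, star_star]
      exact h_e_unit' i
    rw [this, diagonal_one]
  set U₁ := W * (V * diagonal e * star V) with hU1def
  set U₂ := W * (V * diagonal (star e) * star V) with hU2def
  have hU1mem : U₁ ∈ Matrix.unitaryGroup (Fin n) ℂ :=
    mul_mem hWmem (mul_mem (mul_mem hVmem hdiagE) (Unitary.star_mem hVmem))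
  have hU2mem : U₂ ∈ Matrix.unitaryGroup (Fin n) ℂ :=
    mul_mem hWmem (mul_mem (mul_mem hVmem hdiagE') (Unitary.star_mem hVmem))
  -- C is the average of U₁ and U₂
  have hCavg : U₁ + U₂ = (2:ℂ) • C := by
    have h1 : U₁ + U₂ = W * (V * (diagonal e + diagonal (star e)) * star V) := by
      rw [hU1def, hU2def]; noncomm_ring
    rw [h1, diagonal_add]
    have h2 : (fun i => e i + star e i) = fun i => ((2 * a i : ℝ) : ℂ) := by
      funext i
      rw [hedef]
      simp only [Pi.star_apply, star_add, star_mul', Complex.star_def, Complex.conj_ofReal,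
        Complex.conj_I]
      push_cast
      ring
    rw [show (fun i => e i + (star e) i) = fun i => ((2 * a i : ℝ) : ℂ) from h2]
    rw [hWdef, hGdef, mul_assoc (C), key]
    have h3 : (fun i => g i * ((2 * a i : ℝ) : ℂ)) = fun _ => (2:ℂ) := by
      funext i
      rw [hgdef]
      simp only
      push_cast
      rw [show ((a i:ℂ))⁻¹ * (2 * (a i:ℂ)) = 2 * ((a i:ℂ) * ((a i:ℂ))⁻¹) by ring]
      rw [mul_inv_cancel₀ (by exact_mod_cast (ha_pos i).ne'), mul_one]
    rw [h3]
    have h4 : V * diagonal (fun _ : Fin n => (2:ℂ)) * star V = (2:ℂ) • 1 := by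
      rw [show (diagonal (fun _ : Fin n => (2:ℂ))) = (2:ℂ) • (1 : Matrix (Fin n) (Fin n) ℂ) by
        ext i j; by_cases h : i = j <;> simp [Matrix.diagonal_apply, Matrix.one_apply, h]]
      rw [Matrix.mul_smul, Matrix.smul_mul, mul_one, hVV]
    rw [h4, Matrix.mul_smul, mul_one]
  have hChalf : C = (1/2 : ℂ) • (U₁ + U₂) := by
    rw [hCavg, smul_smul]
    norm_num
  -- expand A = C * B * Cᴴ
  have hexp : A = (1/4 : ℂ) • (U₁ * B * star U₁ + U₁ * B * star U₂
      + U₂ * B * star U₁ + U₂ * B * star U₂) := by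
    rw [← hCBC, ← star_eq_conjTranspose]
    rw [hChalf]
    rw [star_smul, star_add]
    rw [show star (1/2 : ℂ) = (1/2 : ℂ) by simp]
    rw [Matrix.smul_mul, Matrix.smul_mul, Matrix.mul_smul, smul_smul]
    rw [show (1/2 : ℂ) * (1/2 : ℂ) = (1/4 : ℂ) by norm_num]
    congr 1
    noncomm_ring
  -- conclude
  have hNs : ∀ (P R' : Matrix (Fin n) (Fin n) ℂ), P ∈ Matrix.unitaryGroup (Fin n) ℂ →
      R' ∈ Matrix.unitaryGroup (Fin n) ℂ → N (P * B * star R') = N B := by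
    intro P R' hP hR'
    exact hinv B P hP (star R') (Unitary.star_mem hR')
  calc N A = ‖(1/4 : ℂ)‖ * N (U₁ * B * star U₁ + U₁ * B * star U₂
      + U₂ * B * star U₁ + U₂ * B * star U₂) := by rw [← hsmul, ← hexp]
    _ ≤ (1/4) * (N (U₁ * B * star U₁) + N (U₁ * B * star U₂)
        + N (U₂ * B * star U₁) + N (U₂ * B * star U₂)) := by
      have hn : ‖(1/4 : ℂ)‖ = 1/4 := by norm_num
      rw [hn]
      have t1 := htri (U₁ * B * star U₁ + U₁ * B * star U₂ + U₂ * B * star U₁) (U₂ * B * star U₂)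
      have t2 := htri (U₁ * B * star U₁ + U₁ * B * star U₂) (U₂ * B * star U₁)
      have t3 := htri (U₁ * B * star U₁) (U₁ * B * star U₂)
      have h14 : (0:ℝ) ≤ 1/4 := by norm_num
      nlinarith
    _ = N B := by
      rw [hNs U₁ U₁ hU1mem hU1mem, hNs U₁ U₂ hU1mem hU2mem, hNs U₂ U₁ hU2mem hU1mem,
        hNs U₂ U₂ hU2mem hU2mem]
      ring

end


variable (N : Matrix (Fin n) (Fin n) ℂ → ℝ)

lemma aux_N_nonneg'
    (htri : ∀ X Y, N (X + Y) ≤ N X + N Y)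
    (hsmul : ∀ (c : ℂ) X, N (c • X) = ‖c‖ * N X)
    (hdef : ∀ X, N X = 0 ↔ X = 0)
    (X : Matrix (Fin n) (Fin n) ℂ) : 0 ≤ N X := by
  have h0 : N 0 = 0 := (hdef 0).mpr rfl
  have h1 := htri X (-X)
  rw [add_neg_cancel, h0] at h1
  have hneg : N (-X) = N X := by
    have := hsmul (-1) X
    simpa using this
  nlinarith [h1, hneg]

lemma aux_mono
    (htri : ∀ X Y, N (X + Y) ≤ N X + N Y)
    (hsmul : ∀ (c : ℂ) X, N (c • X) = ‖c‖ * N X)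
    (hdef : ∀ X, N X = 0 ↔ X = 0)
    (hinv : ∀ X, ∀ U ∈ Matrix.unitaryGroup (Fin n) ℂ, ∀ V ∈ Matrix.unitaryGroup (Fin n) ℂ,
      N (U * X * V) = N X)
    {A B : Matrix (Fin n) (Fin n) ℂ} (hA : A.PosSemidef)
    (hBA : (B - A).PosSemidef) : N A ≤ N B := by
  have hN1 : 0 ≤ N 1 := aux_N_nonneg' N htri hsmul hdef 1
  refine le_of_forall_pos_le_add (fun ε hε => ?_)
  set δ := ε / (2 * N 1 + 1) with hδdef
  have hδpos : 0 < δ := div_pos hε (by linarith)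
  have hδ1 : (((δ:ℝ):ℂ) • (1 : Matrix (Fin n) (Fin n) ℂ)).PosDef := by
    have heq : ((δ:ℝ):ℂ) • (1 : Matrix (Fin n) (Fin n) ℂ)
        = diagonal (fun _ => ((δ:ℝ):ℂ)) := by
      ext i j; by_cases h : i = j <;> simp [Matrix.diagonal_apply, Matrix.one_apply, h]
    rw [heq]
    exact Matrix.posDef_diagonal_iff.mpr fun i => by
      rw [Complex.zero_lt_real]; exact hδpos
  have hA' : (A + ((δ:ℝ):ℂ) • 1).PosDef := Matrix.PosDef.posSemidef_add hA hδ1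
  have hB' : (B + ((δ:ℝ):ℂ) • 1).PosDef :=
    Matrix.PosDef.posSemidef_add (by simpa using hA.add hBA) hδ1
  have hB'A' : ((B + ((δ:ℝ):ℂ) • 1) - (A + ((δ:ℝ):ℂ) • 1)).PosSemidef := by
    have : (B + ((δ:ℝ):ℂ) • 1) - (A + ((δ:ℝ):ℂ) • 1) = B - A := by abel
    rw [this]; exact hBA
  have hkey := aux_mono_pd N htri hsmul hinv hA' hB' hB'A'
  have hnδ : ‖((δ:ℝ):ℂ)‖ = δ := by
    rw [Complex.norm_real, Real.norm_eq_abs, abs_of_pos hδpos]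
  have hb1 : N A ≤ N (A + ((δ:ℝ):ℂ) • 1) + δ * N 1 := by
    have h1 := htri (A + ((δ:ℝ):ℂ) • 1) (-(((δ:ℝ):ℂ) • 1))
    rw [add_neg_cancel_right] at h1
    have h2 : N (-(((δ:ℝ):ℂ) • (1 : Matrix (Fin n) (Fin n) ℂ))) = δ * N 1 := by
      have hn : N (-(((δ:ℝ):ℂ) • (1 : Matrix (Fin n) (Fin n) ℂ)))
          = N (((δ:ℝ):ℂ) • (1 : Matrix (Fin n) (Fin n) ℂ)) := by
        have := hsmul (-1) (((δ:ℝ):ℂ) • 1)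
        simpa using this
      rw [hn, hsmul, hnδ]
    linarith [h1, h2.le, h2.ge]
  have hb2 : N (B + ((δ:ℝ):ℂ) • 1) ≤ N B + δ * N 1 := by
    have h1 := htri B (((δ:ℝ):ℂ) • 1)
    rw [hsmul, hnδ] at h1
    exact h1
  have : N A ≤ N B + 2 * δ * N 1 := by linarith
  have hfin : 2 * δ * N 1 ≤ ε := by
    have h2 : δ * (2 * N 1 + 1) = ε := by
      rw [hδdef]; field_simp
    nlinarith [hδpos.le]
  linarith



/-- If `N` is a unitarily invariant norm on `Mₙ(ℂ)`, then `X ↦ N(X*X)^{1/2}` is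
also a norm on `Mₙ(ℂ)`, and it is unitarily invariant. -/
theorem stmt10 {n : ℕ} (N : Matrix (Fin n) (Fin n) ℂ → ℝ)
    (htri : ∀ X Y, N (X + Y) ≤ N X + N Y)
    (hsmul : ∀ (c : ℂ) X, N (c • X) = ‖c‖ * N X)
    (hdef : ∀ X, N X = 0 ↔ X = 0)
    (hinv : ∀ X, ∀ U ∈ Matrix.unitaryGroup (Fin n) ℂ, ∀ V ∈ Matrix.unitaryGroup (Fin n) ℂ,
      N (U * X * V) = N X) :
    (∀ X Y : Matrix (Fin n) (Fin n) ℂ,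
      Real.sqrt (N ((X + Y)ᴴ * (X + Y))) ≤ Real.sqrt (N (Xᴴ * X)) + Real.sqrt (N (Yᴴ * Y))) ∧
    (∀ (c : ℂ) (X : Matrix (Fin n) (Fin n) ℂ),
      Real.sqrt (N ((c • X)ᴴ * (c • X))) = ‖c‖ * Real.sqrt (N (Xᴴ * X))) ∧
    (∀ X : Matrix (Fin n) (Fin n) ℂ, Real.sqrt (N (Xᴴ * X)) = 0 ↔ X = 0) ∧
    (∀ X : Matrix (Fin n) (Fin n) ℂ,
      ∀ U ∈ Matrix.unitaryGroup (Fin n) ℂ, ∀ V ∈ Matrix.unitaryGroup (Fin n) ℂ,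
        Real.sqrt (N ((U * X * V)ᴴ * (U * X * V))) = Real.sqrt (N (Xᴴ * X))) := by
  have hN0 : N 0 = 0 := (hdef 0).mpr rfl
  have hNn : ∀ X, 0 ≤ N X := aux_N_nonneg' N htri hsmul hdef
  refine ⟨?_, ?_, ?_, ?_⟩
  · -- triangle inequality
    intro X Y
    by_cases hX : X = 0
    · rw [hX]
      simp only [zero_add, conjTranspose_zero, Matrix.zero_mul, hN0, Real.sqrt_zero]
      exact le_rfl
    by_cases hY : Y = 0
    · rw [hY]
      simp only [add_zero, conjTranspose_zero, Matrix.mul_zero, hN0, Real.sqrt_zero]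
      exact le_rfl
    set a := N (Xᴴ * X) with hadef
    set b := N (Yᴴ * Y) with hbdef
    have ha0 : 0 < a := lt_of_le_of_ne (hNn _) fun h => hX <| by
      exact conjTranspose_mul_self_eq_zero.mp ((hdef _).mp h.symm)
    have hb0 : 0 < b := lt_of_le_of_ne (hNn _) fun h => hY <| by
      exact conjTranspose_mul_self_eq_zero.mp ((hdef _).mp h.symm)
    set sa := Real.sqrt a with hsadef
    set sb := Real.sqrt b with hsbdef
    have hsa : 0 < sa := Real.sqrt_pos.mpr ha0
    have hsb : 0 < sb := Real.sqrt_pos.mpr hb0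
    set t := sb / sa with htdef
    have ht : 0 < t := div_pos hsb hsa
    set s := Real.sqrt t with hsdef
    have hs : 0 < s := Real.sqrt_pos.mpr ht
    -- scalar facts
    have hs2 : ((s:ℝ):ℂ) * ((s:ℝ):ℂ) = ((t:ℝ):ℂ) := by
      rw [← Complex.ofReal_mul, Real.mul_self_sqrt ht.le]
    have hsi2 : ((s⁻¹:ℝ):ℂ) * ((s⁻¹:ℝ):ℂ) = ((t⁻¹:ℝ):ℂ) := by
      rw [← Complex.ofReal_mul, ← mul_inv, Real.mul_self_sqrt ht.le]
    have hss : ((s:ℝ):ℂ) * ((s⁻¹:ℝ):ℂ) = 1 := by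
      rw [← Complex.ofReal_mul, mul_inv_cancel₀ hs.ne', Complex.ofReal_one]
    have hss' : ((s⁻¹:ℝ):ℂ) * ((s:ℝ):ℂ) = 1 := by rw [mul_comm]; exact hss
    set Wm := ((s:ℝ):ℂ) • X - ((s⁻¹:ℝ):ℂ) • Y with hWmdef
    have hdiff : ((1+t:ℝ):ℂ) • (Xᴴ*X) + ((1+t⁻¹:ℝ):ℂ) • (Yᴴ*Y) - (X+Y)ᴴ*(X+Y)
        = Wmᴴ * Wm := by
      rw [hWmdef]
      simp only [conjTranspose_add, conjTranspose_sub, conjTranspose_smul, add_mul, mul_add,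
        sub_mul, mul_sub, Matrix.smul_mul, Matrix.mul_smul, smul_smul,
        Complex.star_def, Complex.conj_ofReal]
      rw [hs2, hsi2, hss, hss']
      push_cast
      module
    have hpsd1 : ((X+Y)ᴴ*(X+Y)).PosSemidef := posSemidef_conjTranspose_mul_self _
    have hpsd2 : (((1+t:ℝ):ℂ) • (Xᴴ*X) + ((1+t⁻¹:ℝ):ℂ) • (Yᴴ*Y)
        - (X+Y)ᴴ*(X+Y)).PosSemidef := by
      rw [hdiff]; exact posSemidef_conjTranspose_mul_self _
    have hmono := aux_mono N htri hsmul hdef hinv hpsd1 hpsd2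
    have hn1 : ‖((1+t:ℝ):ℂ)‖ = 1 + t := by
      rw [Complex.norm_real, Real.norm_eq_abs, abs_of_pos (by linarith)]
    have hn2 : ‖((1+t⁻¹:ℝ):ℂ)‖ = 1 + t⁻¹ := by
      rw [Complex.norm_real, Real.norm_eq_abs, abs_of_pos (by positivity)]
    have hub : N ((X+Y)ᴴ*(X+Y)) ≤ (1+t) * a + (1+t⁻¹) * b := by
      calc N ((X+Y)ᴴ*(X+Y)) ≤ N (((1+t:ℝ):ℂ) • (Xᴴ*X) + ((1+t⁻¹:ℝ):ℂ) • (Yᴴ*Y)) := hmono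
        _ ≤ N (((1+t:ℝ):ℂ) • (Xᴴ*X)) + N (((1+t⁻¹:ℝ):ℂ) • (Yᴴ*Y)) := htri _ _
        _ = (1+t) * a + (1+t⁻¹) * b := by rw [hsmul, hsmul, hn1, hn2]
    have hval : (1+t) * a + (1+t⁻¹) * b = (sa + sb)^2 := by
      have haa : a = sa^2 := (Real.sq_sqrt ha0.le).symm
      have hbb : b = sb^2 := (Real.sq_sqrt hb0.le).symm
      rw [haa, hbb, htdef]
      field_simp
      ring
    calc Real.sqrt (N ((X+Y)ᴴ*(X+Y))) ≤ Real.sqrt ((sa+sb)^2) :=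
          Real.sqrt_le_sqrt (by rw [← hval]; exact hub)
      _ = sa + sb := Real.sqrt_sq (by positivity)
  · -- homogeneity
    intro c X
    have h : (c • X)ᴴ * (c • X) = ((‖c‖^2:ℝ):ℂ) • (Xᴴ * X) := by
      rw [conjTranspose_smul, Matrix.smul_mul, Matrix.mul_smul, smul_smul]
      congr 1
      rw [RCLike.star_def, RCLike.conj_mul]
      push_cast
      rfl
    rw [h, hsmul]
    rw [show ‖((‖c‖^2:ℝ):ℂ)‖ = ‖c‖^2 by
      rw [Complex.norm_real, Real.norm_eq_abs, abs_of_nonneg (sq_nonneg _)]]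
    rw [Real.sqrt_mul (sq_nonneg _), Real.sqrt_sq (norm_nonneg c)]
  · -- definiteness
    intro X
    constructor
    · intro h
      have h1 : N (Xᴴ * X) ≤ 0 := Real.sqrt_eq_zero'.mp h
      have h2 : N (Xᴴ * X) = 0 := le_antisymm h1 (hNn _)
      exact conjTranspose_mul_self_eq_zero.mp ((hdef _).mp h2)
    · intro h
      rw [h]
      simp only [conjTranspose_zero, Matrix.mul_zero, hN0, Real.sqrt_zero]
  · -- unitary invariance
    intro X U hU V hV
    have h : (U * X * V)ᴴ * (U * X * V) = star V * (Xᴴ * X) * V := by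
      calc (U * X * V)ᴴ * (U * X * V)
          = Vᴴ * (Xᴴ * ((star U * U) * (X * V))) := by
            rw [conjTranspose_mul, conjTranspose_mul, ← star_eq_conjTranspose U]
            noncomm_ring
        _ = star V * (Xᴴ * X) * V := by
            rw [hU.1, one_mul, star_eq_conjTranspose]
            noncomm_ring
    rw [h, hinv (Xᴴ * X) (star V) (Unitary.star_mem hV) V hV]
end

section
/- For invertible positive definite matrices A, B ∈ M_n(ℂ) and any unitarily invariant norm ‖·‖, one has ‖(A+B)^{-1}‖^{-1} ≥ ‖A^{-1}‖^{-1} + ‖B^{-1}‖^{-1}. -/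
open Matrix
open scoped ComplexOrder

namespace Stmt11Aux
-- assume aux lemmas (paste for test)
variable {n : ℕ}

lemma mul_cancel_left {A B Z : Matrix (Fin n) (Fin n) ℂ} (h : A * B = 1) :
    A * (B * Z) = Z := by rw [← mul_assoc, h, one_mul]

lemma posDef_conj {M C : Matrix (Fin n) (Fin n) ℂ} (hM : M.PosDef) (hC : IsUnit C) :
    (Cᴴ * M * C).PosDef := by
  refine Matrix.PosDef.of_dotProduct_mulVec_pos (Matrix.isHermitian_conjTranspose_mul_mul C hM.1) fun x hx => ?_
  have hCx : C *ᵥ x ≠ 0 := by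
    intro h
    exact hx ((Matrix.mulVec_injective_iff_isUnit.mpr hC) (h.trans (Matrix.mulVec_zero C).symm))
  simpa only [star_mulVec, dotProduct_mulVec, vecMul_vecMul] using hM.dotProduct_mulVec_pos hCx

section conj

variable {V : Matrix (Fin n) (Fin n) ℂ}

lemma conj_mul (hV : Vᴴ * V = 1) (f g : Fin n → ℂ) :
    (V * diagonal f * Vᴴ) * (V * diagonal g * Vᴴ)
      = V * diagonal (fun i => f i * g i) * Vᴴ := by
  have h : Vᴴ * (V * (diagonal g * Vᴴ)) = diagonal g * Vᴴ := mul_cancel_left hV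
  simp only [mul_assoc]
  rw [h, ← mul_assoc (diagonal f), diagonal_mul_diagonal]

lemma conj_add (f g : Fin n → ℂ) :
    (V * diagonal f * Vᴴ) + (V * diagonal g * Vᴴ)
      = V * diagonal (fun i => f i + g i) * Vᴴ := by
  rw [← Matrix.add_mul, ← Matrix.mul_add, diagonal_add]

lemma conj_sub (f g : Fin n → ℂ) :
    (V * diagonal f * Vᴴ) - (V * diagonal g * Vᴴ)
      = V * diagonal (fun i => f i - g i) * Vᴴ := by
  rw [← Matrix.sub_mul, ← Matrix.mul_sub, diagonal_sub]

lemma conj_smul (c : ℂ) (f : Fin n → ℂ) :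
    c • (V * diagonal f * Vᴴ) = V * diagonal (fun i => c * f i) * Vᴴ := by
  have h : (fun i => c * f i) = c • f := rfl
  rw [h, diagonal_smul]
  simp only [Matrix.mul_smul, Matrix.smul_mul]

lemma conj_conjTranspose (f : Fin n → ℂ) :
    (V * diagonal f * Vᴴ)ᴴ = V * diagonal (fun i => star (f i)) * Vᴴ := by
  simp only [conjTranspose_mul, conjTranspose_conjTranspose, diagonal_conjTranspose, mul_assoc]
  rfl

lemma conj_one (hV : V * Vᴴ = 1) :
    V * diagonal (fun _ : Fin n => (1 : ℂ)) * Vᴴ = 1 := by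
  rw [diagonal_one, mul_one, hV]

lemma conj_inv (hV : Vᴴ * V = 1) (hV' : V * Vᴴ = 1) {f : Fin n → ℂ} (hf : ∀ i, f i ≠ 0) :
    (V * diagonal f * Vᴴ)⁻¹ = V * diagonal (fun i => (f i)⁻¹) * Vᴴ := by
  apply Matrix.inv_eq_right_inv
  rw [conj_mul hV]
  rw [show (fun i => f i * (f i)⁻¹) = fun _ => (1:ℂ) by funext i; exact mul_inv_cancel₀ (hf i)]
  exact conj_one hV'

end conj

lemma eigenvalues_le_one {M : Matrix (Fin n) (Fin n) ℂ} (hM : M.IsHermitian)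
    (h : (1 - M).PosSemidef) (i : Fin n) : hM.eigenvalues i ≤ 1 := by
  set v : Fin n → ℂ := ⇑(hM.eigenvectorBasis i) with hv
  have hMv : M *ᵥ v = (hM.eigenvalues i : ℂ) • v := by
    rw [hv, hM.mulVec_eigenvectorBasis, RCLike.real_smul_eq_coe_smul (K := ℂ)]
    rfl
  have h2 := h.dotProduct_mulVec_nonneg v
  rw [Matrix.sub_mulVec, Matrix.one_mulVec, hMv, dotProduct_sub, dotProduct_smul] at h2
  have hvv : dotProduct (star v) v = 1 := by
    rw [hv, dotProduct_comm, ← EuclideanSpace.inner_eq_star_dotProduct, inner_self_eq_norm_sq_to_K,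
      hM.eigenvectorBasis.orthonormal.1 i]
    norm_num
  rw [hvv, smul_eq_mul, mul_one] at h2
  have : (0:ℂ) ≤ ((1 - hM.eigenvalues i : ℝ) : ℂ) := by push_cast; exact h2
  have := Complex.zero_le_real.mp this
  linarith


lemma N_nonneg (N : Matrix (Fin n) (Fin n) ℂ → ℝ)
    (htri : ∀ X Y, N (X + Y) ≤ N X + N Y)
    (hsmul : ∀ (c : ℂ) X, N (c • X) = ‖c‖ * N X)
    (hdef : ∀ X, N X = 0 ↔ X = 0) (X : Matrix (Fin n) (Fin n) ℂ) : 0 ≤ N X := by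
  have h0 : N 0 = 0 := (hdef 0).mpr rfl
  have hneg : N ((-1 : ℂ) • X) = N X := by rw [hsmul]; simp
  have := htri X ((-1 : ℂ) • X)
  rw [hneg] at this
  have hXX : X + (-1 : ℂ) • X = 0 := by simp
  rw [hXX, h0] at this
  linarith

lemma norm_mono {N : Matrix (Fin n) (Fin n) ℂ → ℝ}
    (htri : ∀ X Y, N (X + Y) ≤ N X + N Y)
    (hsmul : ∀ (c : ℂ) X, N (c • X) = ‖c‖ * N X)
    (hinv : ∀ X, ∀ U ∈ Matrix.unitaryGroup (Fin n) ℂ, ∀ V ∈ Matrix.unitaryGroup (Fin n) ℂ,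
      N (U * X * V) = N X)
    {X Y : Matrix (Fin n) (Fin n) ℂ} (hX : X.PosDef) (hXY : (Y - X).PosSemidef) :
    N X ≤ N Y := by
  have hY : Y.PosDef := by simpa using hX.add_posSemidef hXY
  obtain ⟨R, hRH, hRR⟩ : ∃ R : Matrix (Fin n) (Fin n) ℂ, Rᴴ = R ∧ R * R = Y :=
    by open scoped MatrixOrder in exact ⟨CFC.sqrt Y, (CFC.sqrt_nonneg Y).posSemidef.isHermitian, CFC.sqrt_mul_sqrt_self Y hY.posSemidef.nonneg⟩
  obtain ⟨Q, hQH, hQQ⟩ : ∃ Q : Matrix (Fin n) (Fin n) ℂ, Qᴴ = Q ∧ Q * Q = X :=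
    by open scoped MatrixOrder in exact ⟨CFC.sqrt X, (CFC.sqrt_nonneg X).posSemidef.isHermitian, CFC.sqrt_mul_sqrt_self X hX.posSemidef.nonneg⟩
  have hRdetu : IsUnit R.det := by
    have h1 : R.det * R.det = Y.det := by rw [← det_mul, hRR]
    have h2 : Y.det ≠ 0 := hY.det_pos.ne'
    exact isUnit_iff_ne_zero.mpr (fun h => h2 (by rw [← h1, h, zero_mul]))
  have hRiR : R⁻¹ * R = 1 := Matrix.nonsing_inv_mul R hRdetu
  have hRRi : R * R⁻¹ = 1 := Matrix.mul_nonsing_inv R hRdetu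
  have hRinvH : (R⁻¹)ᴴ = R⁻¹ := Matrix.IsHermitian.inv hRH
  set K := Q * R⁻¹ with hKdef
  have hKH : Kᴴ = R⁻¹ * Q := by rw [hKdef, conjTranspose_mul, hRinvH, hQH]
  set M := Kᴴ * K with hMdef
  have hMeq : M = (R⁻¹)ᴴ * X * R⁻¹ := by
    rw [hMdef, hKH, hKdef, hRinvH, ← hQQ]
    simp only [mul_assoc]
  have hMpd : M.PosDef := by
    rw [hMeq]
    exact posDef_conj hX
      (Matrix.isUnit_nonsing_inv_iff.mpr (Matrix.isUnit_iff_isUnit_det R |>.mpr hRdetu))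
  have h1M : (1 - M).PosSemidef := by
    have h := hXY.conjTranspose_mul_mul_same (R⁻¹)
    have e : (R⁻¹)ᴴ * (Y - X) * R⁻¹ = 1 - M := by
      rw [hRinvH, Matrix.mul_sub, Matrix.sub_mul, hMeq, hRinvH]
      congr 1
      rw [← hRR]
      simp only [mul_assoc]
      rw [hRRi, mul_one, hRiR]
    rw [e] at h
    exact h
  clear hMeq
  -- spectral decomposition of M
  obtain ⟨V, μ, hVV, hVV', hspec, hμpos, hμle⟩ :
      ∃ (V : Matrix (Fin n) (Fin n) ℂ) (μ : Fin n → ℝ),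
        V * Vᴴ = 1 ∧ Vᴴ * V = 1 ∧ M = V * diagonal (fun i => (μ i : ℂ)) * Vᴴ ∧
        (∀ i, 0 < μ i) ∧ (∀ i, μ i ≤ 1) := by
    have hMH : M.IsHermitian := hMpd.1
    refine ⟨hMH.eigenvectorUnitary, hMH.eigenvalues, ?_, ?_, ?_,
      hMpd.eigenvalues_pos, eigenvalues_le_one hMH h1M⟩
    · have := Matrix.mem_unitaryGroup_iff.mp hMH.eigenvectorUnitary.2
      rwa [Matrix.star_eq_conjTranspose] at this
    · have := Matrix.mem_unitaryGroup_iff'.mp hMH.eigenvectorUnitary.2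
      rwa [Matrix.star_eq_conjTranspose] at this
    · have := hMH.spectral_theorem
      rwa [Unitary.conjStarAlgAut_apply, Matrix.star_eq_conjTranspose] at this
  set d : Fin n → ℝ := fun i => Real.sqrt (μ i) with hddef
  set e : Fin n → ℝ := fun i => Real.sqrt (1 - μ i) with hedef
  have hd2 : ∀ i, (d i : ℂ) * (d i : ℂ) = (μ i : ℂ) := fun i => by
    rw [← Complex.ofReal_mul, Real.mul_self_sqrt (hμpos i).le]
  have he2 : ∀ i, (e i : ℂ) * (e i : ℂ) = ((1 - μ i : ℝ) : ℂ) := fun i => by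
    rw [← Complex.ofReal_mul, Real.mul_self_sqrt (by linarith [hμle i])]
  set P := V * diagonal (fun i => (d i : ℂ)) * Vᴴ with hPdef
  have hPP : P * P = M := by
    rw [hPdef, conj_mul hVV', funext hd2, ← hspec]
  have hPH : Pᴴ = P := by
    rw [hPdef, conj_conjTranspose]
    congr 2
    funext i
    simp [Complex.conj_ofReal]
  have hPdetu : IsUnit P.det := by
    rw [hPdef, det_mul, det_mul, det_diagonal]
    have h1 : IsUnit (V.det * Vᴴ.det) := by
      rw [← det_mul, hVV, det_one]; exact isUnit_one
    have hV1 : IsUnit V.det := isUnit_of_mul_isUnit_left h1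
    have hV2 : IsUnit Vᴴ.det := isUnit_of_mul_isUnit_right h1
    refine (hV1.mul ?_).mul hV2
    refine isUnit_iff_ne_zero.mpr (Finset.prod_ne_zero_iff.mpr fun i _ => ?_)
    simp only [ne_eq, Complex.ofReal_eq_zero]
    exact (Real.sqrt_pos.mpr (hμpos i)).ne'
  have hPiP : P⁻¹ * P = 1 := Matrix.nonsing_inv_mul P hPdetu
  have hPPi : P * P⁻¹ = 1 := Matrix.mul_nonsing_inv P hPdetu
  have hPinvH : (P⁻¹)ᴴ = P⁻¹ := Matrix.IsHermitian.inv hPH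
  set W := K * P⁻¹ with hWdef
  have hWmem : W ∈ Matrix.unitaryGroup (Fin n) ℂ := by
    rw [Matrix.mem_unitaryGroup_iff', Matrix.star_eq_conjTranspose, hWdef, conjTranspose_mul,
      hPinvH]
    have h2 : (P⁻¹ * Kᴴ) * (K * P⁻¹) = P⁻¹ * ((Kᴴ * K) * P⁻¹) := by
      simp only [mul_assoc]
    rw [h2, ← hMdef, ← hPP]
    simp only [mul_assoc]
    rw [hPPi, mul_one, hPiP]
  have hWH : Wᴴ ∈ Matrix.unitaryGroup (Fin n) ℂ := by
    rw [← Matrix.star_eq_conjTranspose]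
    exact Unitary.star_mem hWmem
  have hKWP : K = W * P := by rw [hWdef, mul_assoc, hPiP, mul_one]
  have hXKYK : X = K * Y * Kᴴ := by
    rw [hKH, hKdef, ← hRR, ← hQQ]
    simp only [mul_assoc]
    congr 1
    rw [mul_cancel_left hRiR, mul_cancel_left hRRi]
  -- the two unitaries averaging to P
  set w1 : Fin n → ℂ := fun i => (d i : ℂ) + (e i : ℂ) * Complex.I with hw1def
  set w2 : Fin n → ℂ := fun i => (d i : ℂ) - (e i : ℂ) * Complex.I with hw2def
  set W1 := V * diagonal w1 * Vᴴ with hW1def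
  set W2 := V * diagonal w2 * Vᴴ with hW2def
  have hW1H : W1ᴴ = W2 := by
    rw [hW1def, conj_conjTranspose, hW2def]
    congr 2
    funext i
    simp [hw1def, hw2def, Complex.conj_ofReal, sub_eq_add_neg]
  have hW1mem : W1 ∈ Matrix.unitaryGroup (Fin n) ℂ := by
    rw [Matrix.mem_unitaryGroup_iff', Matrix.star_eq_conjTranspose, hW1H, hW2def, hW1def,
      conj_mul hVV']
    have h21 : (fun i => w2 i * w1 i) = fun _ : Fin n => (1 : ℂ) := by
      funext i
      have h : w2 i * w1 i = (d i : ℂ) * (d i : ℂ) + (e i : ℂ) * (e i : ℂ) := by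
        rw [hw1def, hw2def]; ring_nf
        rw [Complex.I_sq]; ring
      rw [h, hd2 i, he2 i]
      push_cast
      ring
    rw [h21, conj_one hVV]
  have hW2mem : W2 ∈ Matrix.unitaryGroup (Fin n) ℂ := by
    rw [← hW1H, ← Matrix.star_eq_conjTranspose]
    exact Unitary.star_mem hW1mem
  have hPW : P = (2⁻¹ : ℂ) • (W1 + W2) := by
    rw [hW1def, hW2def, conj_add, conj_smul, hPdef]
    congr 1
    congr 1
    funext i
    rw [hw1def, hw2def]
    ring
  -- norm computation
  have hNX : N X = N (P * Y * P) := by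
    have hX' : X = W * (P * Y * P) * Wᴴ := by
      rw [hXKYK, hKWP, conjTranspose_mul, hPH]
      simp only [mul_assoc]
    rw [hX']
    exact hinv (P * Y * P) W hWmem Wᴴ hWH
  have hexp : P * Y * P
      = (4⁻¹ : ℂ) • (W1 * Y * W1 + W1 * Y * W2 + W2 * Y * W1 + W2 * Y * W2) := by
    rw [hPW]
    simp only [Matrix.smul_mul, Matrix.mul_smul, Matrix.add_mul, Matrix.mul_add, smul_smul,
      smul_add]
    rw [show ((2:ℂ)⁻¹ * 2⁻¹) = (4⁻¹ : ℂ) by norm_num]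
    abel
  have hN11 : N (W1 * Y * W1) = N Y := hinv Y W1 hW1mem W1 hW1mem
  have hN12 : N (W1 * Y * W2) = N Y := hinv Y W1 hW1mem W2 hW2mem
  have hN21 : N (W2 * Y * W1) = N Y := hinv Y W2 hW2mem W1 hW1mem
  have hN22 : N (W2 * Y * W2) = N Y := hinv Y W2 hW2mem W2 hW2mem
  have hfour : N (W1 * Y * W1 + W1 * Y * W2 + W2 * Y * W1 + W2 * Y * W2) ≤ 4 * N Y := by
    have t1 := htri (W1 * Y * W1 + W1 * Y * W2 + W2 * Y * W1) (W2 * Y * W2)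
    have t2 := htri (W1 * Y * W1 + W1 * Y * W2) (W2 * Y * W1)
    have t3 := htri (W1 * Y * W1) (W1 * Y * W2)
    rw [hN11, hN12, hN21, hN22] at *
    linarith
  have h4 : ‖(4⁻¹ : ℂ)‖ = 4⁻¹ := by norm_num
  rw [hNX, hexp, hsmul, h4]
  linarith

lemma scalar_ineq {s t dd : ℝ} (hs : 0 ≤ s) (ht : 0 ≤ t) (hst : s + t = 1) (hd : 0 < dd) :
    0 ≤ s ^ 2 + t ^ 2 / dd - 1 / (1 + dd) := by
  have h1 : (0:ℝ) < 1 + dd := by linarith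
  rw [show s ^ 2 + t ^ 2 / dd - 1 / (1 + dd)
      = (s ^ 2 * dd * (1 + dd) + t ^ 2 * (1 + dd) - dd) / (dd * (1 + dd)) by
    field_simp]
  apply div_nonneg _ (by positivity)
  have h2 : dd * (s + t) ^ 2 = dd := by rw [hst]; ring
  nlinarith [sq_nonneg (s * dd - t), h2]

lemma inv_convex {A B : Matrix (Fin n) (Fin n) ℂ} (hA : A.PosDef) (hB : B.PosDef)
    {s t : ℝ} (hs : 0 ≤ s) (ht : 0 ≤ t) (hst : s + t = 1) :
    (((s ^ 2 : ℝ) : ℂ) • A⁻¹ + ((t ^ 2 : ℝ) : ℂ) • B⁻¹ - (A + B)⁻¹).PosSemidef := by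
  obtain ⟨R, hRH, hRR⟩ : ∃ R : Matrix (Fin n) (Fin n) ℂ, Rᴴ = R ∧ R * R = A :=
    by open scoped MatrixOrder in exact ⟨CFC.sqrt A, (CFC.sqrt_nonneg A).posSemidef.isHermitian, CFC.sqrt_mul_sqrt_self A hA.posSemidef.nonneg⟩
  have hRdetu : IsUnit R.det := by
    have h1 : R.det * R.det = A.det := by rw [← det_mul, hRR]
    have h2 : A.det ≠ 0 := hA.det_pos.ne'
    exact isUnit_iff_ne_zero.mpr (fun h => h2 (by rw [← h1, h, zero_mul]))
  have hRiR : R⁻¹ * R = 1 := Matrix.nonsing_inv_mul R hRdetu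
  have hRRi : R * R⁻¹ = 1 := Matrix.mul_nonsing_inv R hRdetu
  have hRinvH : (R⁻¹)ᴴ = R⁻¹ := Matrix.IsHermitian.inv hRH
  set Z := R⁻¹ * B * R⁻¹ with hZdef
  have hZpd : Z.PosDef := by
    have := posDef_conj hB
      (Matrix.isUnit_nonsing_inv_iff.mpr (Matrix.isUnit_iff_isUnit_det R |>.mpr hRdetu))
    rwa [hRinvH] at this
  obtain ⟨V, dv, hVV, hVV', hspec, hdpos⟩ :
      ∃ (V : Matrix (Fin n) (Fin n) ℂ) (dv : Fin n → ℝ),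
        V * Vᴴ = 1 ∧ Vᴴ * V = 1 ∧ Z = V * diagonal (fun i => (dv i : ℂ)) * Vᴴ ∧
        (∀ i, 0 < dv i) := by
    have hZH : Z.IsHermitian := hZpd.1
    refine ⟨hZH.eigenvectorUnitary, hZH.eigenvalues, ?_, ?_, ?_, hZpd.eigenvalues_pos⟩
    · have := Matrix.mem_unitaryGroup_iff.mp hZH.eigenvectorUnitary.2
      rwa [Matrix.star_eq_conjTranspose] at this
    · have := Matrix.mem_unitaryGroup_iff'.mp hZH.eigenvectorUnitary.2
      rwa [Matrix.star_eq_conjTranspose] at this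
    · have := hZH.spectral_theorem
      rwa [Unitary.conjStarAlgAut_apply, Matrix.star_eq_conjTranspose] at this
  have hBZ : B = R * (V * diagonal (fun i => (dv i : ℂ)) * Vᴴ) * R := by
    rw [← hspec, hZdef]
    simp only [← mul_assoc]
    rw [hRRi, one_mul, mul_assoc, hRiR, mul_one]
  have hAinv : A⁻¹ = R⁻¹ * (V * diagonal (fun _ : Fin n => (1 : ℂ)) * Vᴴ) * R⁻¹ := by
    rw [conj_one hVV, mul_one, ← hRR, Matrix.mul_inv_rev]
  have hBinv : B⁻¹ = R⁻¹ * (V * diagonal (fun i => ((dv i : ℂ))⁻¹) * Vᴴ) * R⁻¹ := by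
    rw [hBZ, Matrix.mul_inv_rev, Matrix.mul_inv_rev,
      conj_inv hVV' hVV (fun i => by
        simpa only [ne_eq, Complex.ofReal_eq_zero] using (hdpos i).ne')]
    simp only [mul_assoc]
  have hAB : A + B = R * (V * diagonal (fun i => (1 : ℂ) + (dv i : ℂ)) * Vᴴ) * R := by
    have h := conj_add (V := V) (fun _ : Fin n => (1 : ℂ)) (fun i => (dv i : ℂ))
    rw [← h, conj_one hVV, Matrix.mul_add, Matrix.add_mul, mul_one, hRR, ← hBZ]
  have hABinv : (A + B)⁻¹
      = R⁻¹ * (V * diagonal (fun i => ((1 : ℂ) + (dv i : ℂ))⁻¹) * Vᴴ) * R⁻¹ := by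
    rw [hAB, Matrix.mul_inv_rev, Matrix.mul_inv_rev,
      conj_inv hVV' hVV (fun i => by
        have h0 : (0:ℝ) < 1 + dv i := by linarith [hdpos i]
        intro h
        rw [show (1:ℂ) + (dv i : ℂ) = ((1 + dv i : ℝ) : ℂ) by push_cast; ring] at h
        exact h0.ne' (by exact_mod_cast h))]
    simp only [mul_assoc]
  -- combine
  set c : Fin n → ℝ := fun i => s ^ 2 + t ^ 2 / dv i - 1 / (1 + dv i) with hcdef
  have hkey : ((s ^ 2 : ℝ) : ℂ) • A⁻¹ + ((t ^ 2 : ℝ) : ℂ) • B⁻¹ - (A + B)⁻¹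
      = (R⁻¹ * V) * diagonal (fun i => (c i : ℂ)) * (R⁻¹ * V)ᴴ := by
    have hJ : ∀ f : Fin n → ℂ,
        R⁻¹ * (V * diagonal f * Vᴴ) * R⁻¹ = (R⁻¹ * V) * diagonal f * (R⁻¹ * V)ᴴ := by
      intro f
      rw [conjTranspose_mul, hRinvH]
      simp only [mul_assoc]
    rw [hAinv, hBinv, hABinv, hJ, hJ, hJ, conj_smul, conj_smul, conj_add, conj_sub]
    have hfun : (fun i => (((s ^ 2 : ℝ) : ℂ) * (fun _ : Fin n => (1:ℂ)) i
          + ((t ^ 2 : ℝ) : ℂ) * (fun i => ((dv i : ℂ))⁻¹) i)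
          - (fun i => ((1 : ℂ) + (dv i : ℂ))⁻¹) i)
        = fun i => (c i : ℂ) := by
      funext i
      simp only [hcdef]
      push_cast
      rw [mul_one]
      ring
    rw [hfun]
  rw [hkey]
  refine (Matrix.PosSemidef.diagonal ?_).mul_mul_conjTranspose_same _
  intro i
  simp only [Pi.zero_apply]
  rw [Complex.zero_le_real]
  exact scalar_ineq hs ht hst (hdpos i)

end Stmt11Aux

/-- For positive definite `A, B` and any unitarily invariant norm `N`,
`N((A+B)⁻¹)⁻¹ ≥ N(A⁻¹)⁻¹ + N(B⁻¹)⁻¹`. -/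
theorem stmt11 {n : ℕ} (N : Matrix (Fin n) (Fin n) ℂ → ℝ)
    (htri : ∀ X Y, N (X + Y) ≤ N X + N Y)
    (hsmul : ∀ (c : ℂ) X, N (c • X) = ‖c‖ * N X)
    (hdef : ∀ X, N X = 0 ↔ X = 0)
    (hinv : ∀ X, ∀ U ∈ Matrix.unitaryGroup (Fin n) ℂ, ∀ V ∈ Matrix.unitaryGroup (Fin n) ℂ,
      N (U * X * V) = N X)
    (A B : Matrix (Fin n) (Fin n) ℂ) (hA : A.PosDef) (hB : B.PosDef) :
    (N A⁻¹)⁻¹ + (N B⁻¹)⁻¹ ≤ (N (A + B)⁻¹)⁻¹ := by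
  rcases Nat.eq_zero_or_pos n with hn | hn
  · subst hn
    have hA0 : A⁻¹ = (0 : Matrix (Fin 0) (Fin 0) ℂ) := Subsingleton.elim _ _
    have hB0 : B⁻¹ = (0 : Matrix (Fin 0) (Fin 0) ℂ) := Subsingleton.elim _ _
    have hAB0 : (A + B)⁻¹ = (0 : Matrix (Fin 0) (Fin 0) ℂ) := Subsingleton.elim _ _
    rw [hA0, hB0, hAB0, (hdef 0).mpr rfl]
    norm_num
  · have posN : ∀ {X : Matrix (Fin n) (Fin n) ℂ}, X.PosDef → 0 < N X := by
      intro X hXpd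
      have h0 : 0 ≤ N X := Stmt11Aux.N_nonneg N htri hsmul hdef X
      have hne : X ≠ 0 := by
        have hxne : (Pi.single (⟨0, hn⟩ : Fin n) (1:ℂ) : Fin n → ℂ) ≠ 0 := by
          intro hc
          have := congrFun hc ⟨0, hn⟩
          simp at this
        intro h
        have h2 := hXpd.dotProduct_mulVec_pos hxne
        rw [h] at h2
        simp at h2
      exact lt_of_le_of_ne h0 (fun h => hne ((hdef X).mp h.symm))
    set a := N A⁻¹ with hadef
    set b := N B⁻¹ with hbdef
    have ha : 0 < a := posN hA.inv
    have hb : 0 < b := posN hB.inv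
    have hABpd : (A + B).PosDef := hA.add hB
    have hc : 0 < N (A + B)⁻¹ := posN hABpd.inv
    have hab : 0 < a + b := by linarith
    set s := b / (a + b) with hsdef
    set t := a / (a + b) with htdef
    have hs : 0 ≤ s := by positivity
    have ht : 0 ≤ t := by positivity
    have hst : s + t = 1 := by
      rw [hsdef, htdef, ← add_div, add_comm b a, div_self hab.ne']
    have hmono := Stmt11Aux.norm_mono htri hsmul hinv hABpd.inv
      (Stmt11Aux.inv_convex hA hB hs ht hst)
    have htri2 := htri (((s ^ 2 : ℝ) : ℂ) • A⁻¹) (((t ^ 2 : ℝ) : ℂ) • B⁻¹)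
    rw [hsmul, hsmul] at htri2
    have hns : ‖((s ^ 2 : ℝ) : ℂ)‖ = s ^ 2 := by
      rw [Complex.norm_real]
      exact abs_of_nonneg (by positivity)
    have hnt : ‖((t ^ 2 : ℝ) : ℂ)‖ = t ^ 2 := by
      rw [Complex.norm_real]
      exact abs_of_nonneg (by positivity)
    rw [hns, hnt, ← hadef, ← hbdef] at htri2
    have hkey : N (A + B)⁻¹ ≤ s ^ 2 * a + t ^ 2 * b := le_trans hmono htri2
    have hval : s ^ 2 * a + t ^ 2 * b = a * b / (a + b) := by
      rw [hsdef, htdef]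
      field_simp
      ring
    rw [hval] at hkey
    have h2 : N (A + B)⁻¹ * (a + b) ≤ a * b := (le_div_iff₀ hab).mp hkey
    have h1 : a⁻¹ + b⁻¹ = (a + b) / (a * b) := by
      field_simp
      ring
    rw [h1, div_le_iff₀ (by positivity)]
    calc a + b = (N (A + B)⁻¹)⁻¹ * (N (A + B)⁻¹ * (a + b)) := by
          rw [← mul_assoc, inv_mul_cancel₀ hc.ne', one_mul]
      _ ≤ (N (A + B)⁻¹)⁻¹ * (a * b) := by
          exact mul_le_mul_of_nonneg_left h2 (by positivity)
end

section
/- For positive definite matrices A, B ∈ M_n(ℂ), the Fuglede–Kadison-type determinant satisfies det(A+B)^{1/n} ≥ det(A)^{1/n} + det(B)^{1/n}; more generally, for any strictly increasing convex ψ : [0,∞) → [0,∞) with ψ(0) = 0, (det ψ(A+B))^{1/n} ≥ (det ψ(A))^{1/n} + (det ψ(B))^{1/n}. -/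
open Matrix Finset
open scoped ComplexOrder InnerProductSpace

/-- Scalar Mahler / Minkowski inequality for products. -/
lemma my_mahler {n : ℕ} (hn : 0 < n) (a b : Fin n → ℝ) (ha : ∀ i, 0 < a i)
    (hb : ∀ i, 0 < b i) :
    (∏ i, a i) ^ (1 / (n : ℝ)) + (∏ i, b i) ^ (1 / (n : ℝ)) ≤
      (∏ i, (a i + b i)) ^ (1 / (n : ℝ)) := by
  set c : Fin n → ℝ := fun i => a i + b i with hc
  have hcpos : ∀ i, 0 < c i := fun i => add_pos (ha i) (hb i)
  have hPc : (0:ℝ) < ∏ i, c i := Finset.prod_pos fun i _ => hcpos i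
  have key : ∀ u : Fin n → ℝ, (∀ i, 0 < u i) →
      (∏ i, u i) ^ (1 / (n:ℝ)) ≤ (∏ i, c i) ^ (1 / (n:ℝ)) * ∑ i, (1/(n:ℝ)) * (u i / c i) := by
    intro u hu
    have h1 : ∏ i, (u i / c i) ^ (1/(n:ℝ)) ≤ ∑ i, (1/(n:ℝ)) * (u i / c i) :=
      Real.geom_mean_le_arith_mean_weighted univ (fun _ => 1/(n:ℝ)) (fun i => u i / c i)
        (fun i _ => by positivity)
        (by
          simp only [Finset.sum_const, Finset.card_univ, Fintype.card_fin, nsmul_eq_mul]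
          field_simp)
        (fun i _ => div_nonneg (hu i).le (hcpos i).le)
    have h2 : (∏ i, u i) ^ (1/(n:ℝ)) =
        (∏ i, c i) ^ (1/(n:ℝ)) * ∏ i, (u i / c i) ^ (1/(n:ℝ)) := by
      rw [Real.finset_prod_rpow _ _ (fun i _ => div_nonneg (hu i).le (hcpos i).le) _,
        ← Real.mul_rpow hPc.le (Finset.prod_nonneg fun i _ => div_nonneg (hu i).le (hcpos i).le)]
      congr 1
      rw [← Finset.prod_mul_distrib]
      exact Finset.prod_congr rfl fun i _ => (mul_div_cancel₀ _ (hcpos i).ne').symm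
    rw [h2]
    exact mul_le_mul_of_nonneg_left h1 (by positivity)
  have hA := key a ha
  have hB := key b hb
  have hsum : (∑ i, (1/(n:ℝ)) * (a i / c i)) + (∑ i, (1/(n:ℝ)) * (b i / c i)) = 1 := by
    rw [← Finset.sum_add_distrib]
    have : ∀ i ∈ univ, (1/(n:ℝ)) * (a i / c i) + (1/(n:ℝ)) * (b i / c i) = 1/(n:ℝ) := by
      intro i _
      rw [← mul_add, ← add_div, div_self (hcpos i).ne']
      ring
    rw [Finset.sum_congr rfl this]
    simp only [Finset.sum_const, Finset.card_univ, Fintype.card_fin, nsmul_eq_mul]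
    field_simp
  calc (∏ i, a i) ^ (1 / (n : ℝ)) + (∏ i, b i) ^ (1 / (n : ℝ))
      ≤ (∏ i, c i) ^ (1/(n:ℝ)) * ((∑ i, (1/(n:ℝ)) * (a i / c i)) + (∑ i, (1/(n:ℝ)) * (b i / c i))) := by
        rw [mul_add]; exact add_le_add hA hB
    _ = (∏ i, c i) ^ (1/(n:ℝ)) := by rw [hsum, mul_one]

section helpers
lemma my_det_re_eq_prod {n : ℕ} {P : Matrix (Fin n) (Fin n) ℂ} (hP : P.IsHermitian) :
    P.det = ((∏ i, hP.eigenvalues i : ℝ) : ℂ) := by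
  rw [hP.det_eq_prod_eigenvalues]; push_cast; rfl

lemma my_det_real {n : ℕ} {P : Matrix (Fin n) (Fin n) ℂ} (hP : P.IsHermitian) :
    P.det = ((P.det.re : ℝ) : ℂ) := by
  rw [my_det_re_eq_prod hP, Complex.ofReal_re]

lemma my_det_cfc {n : ℕ} {M : Matrix (Fin n) (Fin n) ℂ} (hM : M.IsHermitian) (f : ℝ → ℝ) :
    (cfc f M).det = ((∏ i, f (hM.eigenvalues i) : ℝ) : ℂ) := by
  rw [hM.cfc_eq, Matrix.IsHermitian.cfc, Unitary.conjStarAlgAut_apply]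
  have hU : (hM.eigenvectorUnitary : Matrix (Fin n) (Fin n) ℂ) *
      star (hM.eigenvectorUnitary : Matrix (Fin n) (Fin n) ℂ) = 1 :=
    Unitary.mul_star_self_of_mem hM.eigenvectorUnitary.2
  have h2 : ((hM.eigenvectorUnitary : Matrix (Fin n) (Fin n) ℂ) *
        diagonal (RCLike.ofReal ∘ f ∘ hM.eigenvalues) *
        star (hM.eigenvectorUnitary : Matrix (Fin n) (Fin n) ℂ)).det =
      ((hM.eigenvectorUnitary : Matrix (Fin n) (Fin n) ℂ) *
        star (hM.eigenvectorUnitary : Matrix (Fin n) (Fin n) ℂ)).det *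
        (diagonal (RCLike.ofReal ∘ f ∘ hM.eigenvalues)).det := by
    rw [det_mul, det_mul, det_mul]; ring
  rw [h2, hU, det_one, one_mul, det_diagonal]
  push_cast
  rfl

lemma my_posdef_conj {n : ℕ} {B K : Matrix (Fin n) (Fin n) ℂ} (hB : B.PosDef)
    (hK : IsUnit K) : (Kᴴ * B * K).PosDef := by
  refine Matrix.PosDef.of_dotProduct_mulVec_pos (isHermitian_conjTranspose_mul_mul K hB.1) fun x hx => ?_
  have hKx : K *ᵥ x ≠ 0 := by
    intro h
    apply hx
    have hinj := Matrix.mulVec_injective_iff_isUnit.mpr hK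
    have h0 : K *ᵥ x = K *ᵥ 0 := by simpa using h
    exact hinj h0
  simpa only [star_mulVec, dotProduct_mulVec, vecMul_vecMul] using hB.dotProduct_mulVec_pos hKx
end helpers

open scoped MatrixOrder in
lemma my_minkowski {n : ℕ} (hn : 0 < n) (A B : Matrix (Fin n) (Fin n) ℂ)
    (hA : A.PosDef) (hB : B.PosDef) :
    A.det.re ^ (1 / (n : ℝ)) + B.det.re ^ (1 / (n : ℝ)) ≤ (A + B).det.re ^ (1 / (n : ℝ)) := by
  classical
  set S := CFC.sqrt A with hSdef
  have hSpsd : S.PosSemidef := (CFC.sqrt_nonneg A).posSemidef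
  have hSH : S.IsHermitian := hSpsd.1
  have hSS : S * S = A := CFC.sqrt_mul_sqrt_self A hA.posSemidef.nonneg
  have hdetS_sq : S.det * S.det = A.det := by rw [← det_mul, hSS]
  have hdetA_pos : (0:ℝ) < A.det.re := (Complex.lt_def.mp hA.det_pos).1
  have hs2 : S.det.re * S.det.re = A.det.re := by
    have h := hdetS_sq
    rw [my_det_real hSH, my_det_real hA.1, ← Complex.ofReal_mul] at h
    exact_mod_cast h
  have hsnonneg : 0 ≤ S.det.re := by
    have h := my_det_re_eq_prod hSH
    have : S.det.re = ∏ i, hSH.eigenvalues i := by rw [h, Complex.ofReal_re]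
    rw [this]
    exact Finset.prod_nonneg fun i _ => hSpsd.eigenvalues_nonneg i
  have hspos : 0 < S.det.re := by
    rcases hsnonneg.lt_or_eq with h | h
    · exact h
    · exfalso; rw [← h, mul_zero] at hs2; exact hdetA_pos.ne hs2
  have hdetSne : S.det ≠ 0 := by
    rw [my_det_real hSH]
    exact_mod_cast hspos.ne'
  have hSunit : IsUnit S := (isUnit_iff_isUnit_det S).mpr hdetSne.isUnit
  have hSinvunit : IsUnit S⁻¹ := Matrix.isUnit_nonsing_inv_iff.mpr hSunit
  set M := S⁻¹ * B * S⁻¹ with hMdef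
  have hSinvH : S⁻¹.IsHermitian := hSH.inv
  have hMposdef : M.PosDef := by
    have h := my_posdef_conj hB hSinvunit
    rwa [hSinvH.eq] at h
  have hMH : M.IsHermitian := hMposdef.1
  have h1M_H : ((1 : Matrix (Fin n) (Fin n) ℂ) + M).IsHermitian :=
    Matrix.isHermitian_one.add hMH
  have hSSinv : S * S⁻¹ = 1 := mul_nonsing_inv S ((isUnit_iff_isUnit_det S).mp hSunit)
  have hSinvS : S⁻¹ * S = 1 := nonsing_inv_mul S ((isUnit_iff_isUnit_det S).mp hSunit)
  have hid : A + B = S * ((1 : Matrix (Fin n) (Fin n) ℂ) + M) * S := by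
    have hmid : S * ((1 : Matrix (Fin n) (Fin n) ℂ) + (S⁻¹ * B * S⁻¹)) * S
        = S * S + (S * S⁻¹) * B * (S⁻¹ * S) := by noncomm_ring
    rw [hMdef, hmid, hSS, hSSinv, hSinvS, one_mul, mul_one]
  have hidB : B = S * M * S := by
    have hmid : S * (S⁻¹ * B * S⁻¹) * S = (S * S⁻¹) * B * (S⁻¹ * S) := by noncomm_ring
    rw [hMdef, hmid, hSSinv, hSinvS, one_mul, mul_one]
  -- real determinant relations
  have hreAB : (A + B).det.re = S.det.re * ((1 : Matrix (Fin n) (Fin n) ℂ) + M).det.re * S.det.re := by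
    have h : (A+B).det = S.det * ((1 : Matrix (Fin n) (Fin n) ℂ) + M).det * S.det := by
      rw [hid, det_mul, det_mul]
    rw [my_det_real (hA.add hB).1, my_det_real hSH, my_det_real h1M_H] at h
    push_cast at h
    exact_mod_cast h
  have hreB : B.det.re = S.det.re * M.det.re * S.det.re := by
    have h : B.det = S.det * M.det * S.det := by rw [hidB, det_mul, det_mul]
    rw [my_det_real hB.1, my_det_real hSH, my_det_real hMH] at h
    push_cast at h
    exact_mod_cast h
  -- eigenvalue products
  set μ := hMH.eigenvalues with hμdef
  have hμpos : ∀ i, 0 < μ i := hMposdef.eigenvalues_pos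
  have hMre : M.det.re = ∏ i, μ i := by
    rw [my_det_re_eq_prod hMH, Complex.ofReal_re]
  have hcfc1M : (1 : Matrix (Fin n) (Fin n) ℂ) + M = cfc (fun x : ℝ => 1 + x) M := by
    have hsa : IsSelfAdjoint M := hMH
    have h := cfc_const_add (1:ℝ) (fun x : ℝ => x) M continuousOn_id hsa
    rw [cfc_id' ℝ M hsa, _root_.map_one] at h
    exact h.symm
  have h1Mre : ((1 : Matrix (Fin n) (Fin n) ℂ) + M).det.re = ∏ i, (1 + μ i) := by
    rw [hcfc1M, my_det_cfc hMH (fun x => 1 + x), Complex.ofReal_re]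
  -- Mahler
  have hmah := my_mahler hn (fun _ => 1) μ (fun _ => one_pos) hμpos
  simp only [Finset.prod_const_one, Real.one_rpow] at hmah
  -- assemble
  have hs2' : (0:ℝ) < S.det.re * S.det.re := mul_pos hspos hspos
  have hm : (0:ℝ) < ∏ i, μ i := Finset.prod_pos fun i _ => hμpos i
  have hp : (0:ℝ) < ∏ i, (1 + μ i) := Finset.prod_pos fun i _ => by linarith [hμpos i]
  rw [hreAB, hreB, hMre, h1Mre, ← hs2]
  have hre1 : S.det.re * (∏ i, μ i) * S.det.re = S.det.re * S.det.re * ∏ i, μ i := by ring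
  have hre2 : S.det.re * (∏ i, (1 + μ i)) * S.det.re = S.det.re * S.det.re * ∏ i, (1 + μ i) := by
    ring
  rw [hre1, hre2]
  have key : (S.det.re * S.det.re) ^ (1/(n:ℝ)) * (1 + (∏ i, μ i) ^ (1/(n:ℝ))) ≤
      (S.det.re * S.det.re) ^ (1/(n:ℝ)) * (∏ i, (1 + μ i)) ^ (1/(n:ℝ)) :=
    mul_le_mul_of_nonneg_left hmah (Real.rpow_nonneg hs2'.le _)
  calc (S.det.re * S.det.re) ^ (1/(n:ℝ)) + (S.det.re * S.det.re * (∏ i, μ i)) ^ (1/(n:ℝ))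
      = (S.det.re * S.det.re) ^ (1/(n:ℝ)) * (1 + (∏ i, μ i) ^ (1/(n:ℝ))) := by
        rw [Real.mul_rpow hs2'.le hm.le]; ring
    _ ≤ (S.det.re * S.det.re) ^ (1/(n:ℝ)) * (∏ i, (1 + μ i)) ^ (1/(n:ℝ)) := key
    _ = (S.det.re * S.det.re * ∏ i, (1 + μ i)) ^ (1/(n:ℝ)) := by
        rw [Real.mul_rpow hs2'.le hp.le]

lemma my_herm_quad {n : ℕ} {H : Matrix (Fin n) (Fin n) ℂ} (hH : H.IsHermitian)
    (S : Finset (Fin n)) (x : EuclideanSpace ℂ (Fin n))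
    (hx : x ∈ Submodule.span ℂ
      (Set.range fun i : S => hH.eigenvectorBasis i.1)) :
    ∃ c : S → ℝ, (∀ i, 0 ≤ c i) ∧
      (star ((WithLp.equiv 2 (Fin n → ℂ)) x) ⬝ᵥ
          (H *ᵥ (WithLp.equiv 2 (Fin n → ℂ)) x)).re =
        ∑ i : S, hH.eigenvalues i.1 * c i ∧
      ‖x‖ ^ 2 = ∑ i : S, c i := by
  rw [Submodule.mem_span_range_iff_exists_fun] at hx
  obtain ⟨d, hd⟩ := hx
  refine ⟨fun i => Complex.normSq (d i), fun i => Complex.normSq_nonneg _, ?_, ?_⟩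
  · have hT : Matrix.toEuclideanLin H x =
        ∑ i : S, (d i * (hH.eigenvalues i.1 : ℂ)) • hH.eigenvectorBasis i.1 := by
      rw [← hd, map_sum]
      refine Finset.sum_congr rfl fun i _ => ?_
      rw [_root_.map_smul]
      have h1 : Matrix.toEuclideanLin H (hH.eigenvectorBasis i.1) =
          hH.eigenvalues i.1 • hH.eigenvectorBasis i.1 := by
        rw [Matrix.toEuclideanLin_apply]
        have h2 := hH.mulVec_eigenvectorBasis i.1
        show (WithLp.equiv 2 (Fin n → ℂ)).symm (H *ᵥ ⇑(hH.eigenvectorBasis i.1)) = _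
        rw [h2]
        rfl
      rw [h1, ← algebraMap_smul ℂ (hH.eigenvalues i.1)
        (hH.eigenvectorBasis i.1 : EuclideanSpace ℂ (Fin n)), smul_smul]
      norm_num
    have hinner : (inner ℂ x (Matrix.toEuclideanLin H x) : ℂ) =
        ∑ i : S, (starRingEnd ℂ) (d i) * (d i * (hH.eigenvalues i.1 : ℂ)) := by
      conv_lhs => rw [hT, ← hd]
      exact (hH.eigenvectorBasis.orthonormal.comp _ Subtype.val_injective).inner_sum
        d (fun i => d i * (hH.eigenvalues i.1 : ℂ)) univ
    have hdot : (star ((WithLp.equiv 2 (Fin n → ℂ)) x) ⬝ᵥ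
        (H *ᵥ (WithLp.equiv 2 (Fin n → ℂ)) x)).re =
        (inner ℂ x (Matrix.toEuclideanLin H x) : ℂ).re := by
      rw [EuclideanSpace.inner_eq_star_dotProduct, dotProduct_comm]; rfl
    rw [hdot, hinner, Complex.re_sum]
    refine Finset.sum_congr rfl fun i _ => ?_
    have h3 : (starRingEnd ℂ) (d i) * (d i * (hH.eigenvalues i.1 : ℂ)) =
        ((Complex.normSq (d i) : ℝ) : ℂ) * ((hH.eigenvalues i.1 : ℝ) : ℂ) := by
      rw [← mul_assoc, ← Complex.normSq_eq_conj_mul_self]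
    rw [h3, ← Complex.ofReal_mul, Complex.ofReal_re, mul_comm]
  · have h1 : (‖x‖:ℝ) ^ 2 = (inner ℂ x x : ℂ).re := (inner_self_eq_norm_sq (𝕜 := ℂ) x).symm
    rw [h1]
    conv_lhs => rw [← hd]
    have h2 : (⟪∑ i : S, d i • hH.eigenvectorBasis i.1,
        ∑ i : S, d i • hH.eigenvectorBasis i.1⟫_ℂ) =
        ∑ i : S, (starRingEnd ℂ) (d i) * d i :=
      (hH.eigenvectorBasis.orthonormal.comp _ Subtype.val_injective).inner_sum d d univ
    rw [h2, Complex.re_sum]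
    exact Finset.sum_congr rfl fun i _ => by
      rw [← Complex.normSq_eq_conj_mul_self]; exact Complex.ofReal_re _

lemma my_weyl_count {n : ℕ} {A C : Matrix (Fin n) (Fin n) ℂ} (hA : A.IsHermitian)
    (hC : C.IsHermitian) (hAC : (C - A).PosSemidef) (t : ℝ) :
    (univ.filter fun i => t ≤ hA.eigenvalues i).card ≤
      (univ.filter fun i => t ≤ hC.eigenvalues i).card := by
  by_contra hcon
  push_neg at hcon
  set SA := univ.filter (fun i => t ≤ hA.eigenvalues i) with hSA
  set SCpos := univ.filter (fun i => t ≤ hC.eigenvalues i) with hSCpos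
  set SC := univ.filter (fun i => ¬ t ≤ hC.eigenvalues i) with hSC
  have hcard : SCpos.card + SC.card = n := by
    rw [hSCpos, hSC]
    rw [Finset.card_filter_add_card_filter_not]
    simp
  have hSAcard : SA.card ≤ n := le_trans (Finset.card_filter_le _ _) (by simp)
  set U := Submodule.span ℂ (Set.range fun i : SA => hA.eigenvectorBasis i.1) with hU
  set W := Submodule.span ℂ (Set.range fun i : SC => hC.eigenvectorBasis i.1) with hW
  have hliA : LinearIndependent ℂ (fun i : SA => hA.eigenvectorBasis i.1) :=
    (hA.eigenvectorBasis.orthonormal.comp _ Subtype.val_injective).linearIndependent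
  have hliC : LinearIndependent ℂ (fun i : SC => hC.eigenvectorBasis i.1) :=
    (hC.eigenvectorBasis.orthonormal.comp _ Subtype.val_injective).linearIndependent
  have hUrank : Module.finrank ℂ U = SA.card := by
    rw [hU, finrank_span_eq_card hliA]
    exact Fintype.card_coe _
  have hWrank : Module.finrank ℂ W = SC.card := by
    rw [hW, finrank_span_eq_card hliC]
    exact Fintype.card_coe _
  have hdim : Module.finrank ℂ (EuclideanSpace ℂ (Fin n)) = n := finrank_euclideanSpace_fin
  have hnd : ¬ Disjoint U W := by
    intro hd
    have := Submodule.finrank_add_finrank_le_of_disjoint hd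
    rw [hUrank, hWrank, hdim] at this
    omega
  rw [Submodule.disjoint_def] at hnd
  push_neg at hnd
  obtain ⟨x, hxU, hxW, hx0⟩ := hnd
  obtain ⟨cA, hcA0, hcAq, hcAn⟩ := my_herm_quad hA SA x hxU
  obtain ⟨cC, hcC0, hcCq, hcCn⟩ := my_herm_quad hC SC x hxW
  have hxnorm : (0:ℝ) < ‖x‖ ^ 2 := pow_pos (norm_pos_iff.mpr hx0) 2
  -- lower bound for A-quadratic form
  have h1 : t * ‖x‖^2 ≤ (star ((WithLp.equiv 2 (Fin n → ℂ)) x) ⬝ᵥ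
      (A *ᵥ (WithLp.equiv 2 (Fin n → ℂ)) x)).re := by
    rw [hcAq, hcAn, Finset.mul_sum]
    refine Finset.sum_le_sum fun i _ => ?_
    have hi : t ≤ hA.eigenvalues i.1 := (Finset.mem_filter.mp i.2).2
    exact mul_le_mul_of_nonneg_right hi (hcA0 i)
  -- strict upper bound for C-quadratic form
  have h2 : (star ((WithLp.equiv 2 (Fin n → ℂ)) x) ⬝ᵥ
      (C *ᵥ (WithLp.equiv 2 (Fin n → ℂ)) x)).re < t * ‖x‖^2 := by
    rw [hcCq, hcCn, Finset.mul_sum]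
    have hex : ∃ i : SC, 0 < cC i := by
      by_contra hno
      push_neg at hno
      have : ∑ i : SC, cC i = 0 :=
        le_antisymm (Finset.sum_nonpos fun i _ => hno i) (Finset.sum_nonneg fun i _ => hcC0 i)
      rw [← hcCn] at this
      exact hxnorm.ne' this
    obtain ⟨i0, hi0⟩ := hex
    refine Finset.sum_lt_sum (fun i _ => ?_) ⟨i0, Finset.mem_univ _, ?_⟩
    · have hi : hC.eigenvalues i.1 < t := not_le.mp (Finset.mem_filter.mp i.2).2
      exact mul_le_mul_of_nonneg_right hi.le (hcC0 i)
    · have hi : hC.eigenvalues i0.1 < t := not_le.mp (Finset.mem_filter.mp i0.2).2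
      exact mul_lt_mul_of_pos_right hi hi0
  -- monotonicity from PSD of C - A
  have h3 : (star ((WithLp.equiv 2 (Fin n → ℂ)) x) ⬝ᵥ
        (A *ᵥ (WithLp.equiv 2 (Fin n → ℂ)) x)).re ≤
      (star ((WithLp.equiv 2 (Fin n → ℂ)) x) ⬝ᵥ
        (C *ᵥ (WithLp.equiv 2 (Fin n → ℂ)) x)).re := by
    have h4' := hAC.re_dotProduct_nonneg ((WithLp.equiv 2 (Fin n → ℂ)) x)
    have h4 : (0:ℝ) ≤ (star ((WithLp.equiv 2 (Fin n → ℂ)) x) ⬝ᵥ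
        ((C - A) *ᵥ (WithLp.equiv 2 (Fin n → ℂ)) x)).re := h4'
    rw [sub_mulVec, dotProduct_sub, Complex.sub_re] at h4
    linarith
  linarith

lemma my_pairing {n : ℕ} (α γ : Fin n → ℝ)
    (hcount : ∀ t : ℝ, (univ.filter fun i => t ≤ α i).card ≤
      (univ.filter fun j => t ≤ γ j).card) :
    ∃ σ : Equiv.Perm (Fin n), ∀ i, α i ≤ γ (σ i) := by
  classical
  have hall := (Finset.all_card_le_biUnion_card_iff_exists_injective
    (fun i : Fin n => univ.filter fun j => α i ≤ γ j)).mp ?_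
  · obtain ⟨f, hfinj, hf⟩ := hall
    exact ⟨Equiv.ofBijective f (Finite.injective_iff_bijective.mp hfinj), fun i =>
      (Finset.mem_filter.mp (hf i)).2⟩
  · intro S
    rcases S.eq_empty_or_nonempty with rfl | hS
    · simp
    obtain ⟨i0, hi0S, hi0min⟩ := Finset.exists_min_image S α hS
    calc S.card ≤ (univ.filter fun i => α i0 ≤ α i).card := by
          apply Finset.card_le_card
          intro i hi
          exact Finset.mem_filter.mpr ⟨Finset.mem_univ _, hi0min i hi⟩
      _ ≤ (univ.filter fun j => α i0 ≤ γ j).card := hcount (α i0)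
      _ ≤ (S.biUnion fun i => univ.filter fun j => α i ≤ γ j).card := by
          apply Finset.card_le_card
          intro j hj
          exact Finset.mem_biUnion.mpr ⟨i0, hi0S, hj⟩

lemma my_slope {ψ : ℝ → ℝ} (hψconv : ConvexOn ℝ (Set.Ici 0) ψ) (hψ0 : ψ 0 = 0)
    {x y : ℝ} (hx : 0 < x) (hxy : x ≤ y) : ψ x / x ≤ ψ y / y := by
  have hy : 0 < y := lt_of_lt_of_le hx hxy
  have hxyr : x / y ≤ 1 := (div_le_one hy).mpr hxy
  have key : ψ x ≤ (x / y) * ψ y := by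
    have h := hψconv.2 (Set.mem_Ici.mpr (le_refl (0:ℝ))) (Set.mem_Ici.mpr hy.le)
      (show (0:ℝ) ≤ 1 - x/y by linarith) (show (0:ℝ) ≤ x/y by positivity)
      (show (1 - x/y) + x/y = 1 by ring)
    simp only [smul_eq_mul, mul_zero, zero_add, hψ0] at h
    rw [div_mul_cancel₀ _ hy.ne'] at h
    simpa using h
  rw [div_le_div_iff₀ hx hy]
  have h2 := mul_le_mul_of_nonneg_right key hy.le
  calc ψ x * y ≤ ((x/y) * ψ y) * y := h2
    _ = ψ y * x := by field_simp


/-- Minkowski determinant inequality `det(A+B)^{1/n} ≥ det(A)^{1/n} + det(B)^{1/n}`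
for positive definite `A, B`, and more generally, for any strictly increasing convex
`ψ : [0,∞) → [0,∞)` with `ψ(0) = 0`,
`(det ψ(A+B))^{1/n} ≥ (det ψ(A))^{1/n} + (det ψ(B))^{1/n}`. -/
theorem stmt19 {n : ℕ} (hn : 0 < n) (A B : Matrix (Fin n) (Fin n) ℂ)
    (hA : A.PosDef) (hB : B.PosDef)
    (ψ : ℝ → ℝ) (hψmono : StrictMonoOn ψ (Set.Ici 0))
    (hψconv : ConvexOn ℝ (Set.Ici 0) ψ)
    (hψpos : ∀ x ∈ Set.Ici (0 : ℝ), 0 ≤ ψ x) (hψ0 : ψ 0 = 0) :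
    A.det.re ^ (1 / (n : ℝ)) + B.det.re ^ (1 / (n : ℝ)) ≤
      (A + B).det.re ^ (1 / (n : ℝ)) ∧
    (cfc ψ A).det.re ^ (1 / (n : ℝ)) + (cfc ψ B).det.re ^ (1 / (n : ℝ)) ≤
      (cfc ψ (A + B)).det.re ^ (1 / (n : ℝ)) := by
  classical
  have hABpd : (A + B).PosDef := hA.add hB
  refine ⟨my_minkowski hn A B hA hB, ?_⟩
  set α := hA.1.eigenvalues with hα
  set β := hB.1.eigenvalues with hβ
  set γ := hABpd.1.eigenvalues with hγ
  have hαpos : ∀ i, 0 < α i := hA.eigenvalues_pos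
  have hβpos : ∀ i, 0 < β i := hB.eigenvalues_pos
  have hγpos : ∀ i, 0 < γ i := hABpd.eigenvalues_pos
  have hψpos' : ∀ z : ℝ, 0 < z → 0 < ψ z := by
    intro z hz
    have h := hψmono (Set.mem_Ici.mpr (le_refl (0:ℝ))) (Set.mem_Ici.mpr hz.le) hz
    rwa [hψ0] at h
  -- determinants of cfc as products
  have hdetψA : (cfc ψ A).det.re = ∏ i, ψ (α i) := by
    rw [my_det_cfc hA.1 ψ, Complex.ofReal_re]
  have hdetψB : (cfc ψ B).det.re = ∏ i, ψ (β i) := by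
    rw [my_det_cfc hB.1 ψ, Complex.ofReal_re]
  have hdetψAB : (cfc ψ (A + B)).det.re = ∏ i, ψ (γ i) := by
    rw [my_det_cfc hABpd.1 ψ, Complex.ofReal_re]
  rw [hdetψA, hdetψB, hdetψAB]
  -- pairings from Weyl-type counting
  obtain ⟨σ, hσ⟩ := my_pairing α γ (fun t => my_weyl_count hA.1 hABpd.1
    (by rw [add_sub_cancel_left]; exact hB.posSemidef) t)
  obtain ⟨τ, hτ⟩ := my_pairing β γ (fun t => my_weyl_count hB.1 hABpd.1
    (by rw [add_sub_cancel_right]; exact hA.posSemidef) t)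
  -- the slope function
  set g : ℝ → ℝ := fun z => ψ z / z with hg
  have hgmono : ∀ {x y : ℝ}, 0 < x → x ≤ y → g x ≤ g y := fun hx hxy =>
    my_slope hψconv hψ0 hx hxy
  have hgnonneg : ∀ z : ℝ, 0 < z → 0 ≤ g z := fun z hz =>
    div_nonneg (hψpos' z hz).le hz.le
  have hψ_eq : ∀ z : ℝ, 0 < z → ψ z = z * g z := fun z hz => by
    rw [hg]; field_simp
  have hG0 : (0:ℝ) ≤ ∏ i, g (γ i) := Finset.prod_nonneg fun i _ => hgnonneg _ (hγpos i)
  have hPα : (0:ℝ) < ∏ i, α i := Finset.prod_pos fun i _ => hαpos i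
  have hPβ : (0:ℝ) < ∏ i, β i := Finset.prod_pos fun i _ => hβpos i
  have hPγ : (0:ℝ) < ∏ i, γ i := Finset.prod_pos fun i _ => hγpos i
  have hexp : (0:ℝ) ≤ 1 / (n:ℝ) := by positivity
  -- product comparison for A
  have hkey : ∀ (δ : Fin n → ℝ) (π : Equiv.Perm (Fin n)), (∀ i, 0 < δ i) →
      (∀ i, δ i ≤ γ (π i)) → ∏ i, ψ (δ i) ≤ (∏ i, δ i) * ∏ i, g (γ i) := by
    intro δ π hδpos hδle
    calc ∏ i, ψ (δ i) = ∏ i, (δ i * g (δ i)) :=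
          Finset.prod_congr rfl fun i _ => hψ_eq (δ i) (hδpos i)
      _ ≤ ∏ i, (δ i * g (γ (π i))) := by
          refine Finset.prod_le_prod (fun i _ => ?_) (fun i _ => ?_)
          · exact mul_nonneg (hδpos i).le (hgnonneg _ (hδpos i))
          · exact mul_le_mul_of_nonneg_left (hgmono (hδpos i) (hδle i)) (hδpos i).le
      _ = (∏ i, δ i) * ∏ i, g (γ (π i)) := Finset.prod_mul_distrib
      _ = (∏ i, δ i) * ∏ i, g (γ i) := by
          rw [Equiv.prod_comp π (fun j => g (γ j))]
  have hψαnn : (0:ℝ) ≤ ∏ i, ψ (α i) := Finset.prod_nonneg fun i _ => (hψpos' _ (hαpos i)).le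
  have hψβnn : (0:ℝ) ≤ ∏ i, ψ (β i) := Finset.prod_nonneg fun i _ => (hψpos' _ (hβpos i)).le
  -- Minkowski in eigenvalue-product form
  have hmink : (∏ i, α i) ^ (1/(n:ℝ)) + (∏ i, β i) ^ (1/(n:ℝ)) ≤
      (∏ i, γ i) ^ (1/(n:ℝ)) := by
    have h := my_minkowski hn A B hA hB
    have e1 : A.det.re = ∏ i, α i := by rw [my_det_re_eq_prod hA.1, Complex.ofReal_re]
    have e2 : B.det.re = ∏ i, β i := by rw [my_det_re_eq_prod hB.1, Complex.ofReal_re]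
    have e3 : (A+B).det.re = ∏ i, γ i := by
      rw [my_det_re_eq_prod hABpd.1, Complex.ofReal_re]
    rwa [e1, e2, e3] at h
  calc (∏ i, ψ (α i)) ^ (1/(n:ℝ)) + (∏ i, ψ (β i)) ^ (1/(n:ℝ))
      ≤ ((∏ i, α i) * ∏ i, g (γ i)) ^ (1/(n:ℝ)) +
        ((∏ i, β i) * ∏ i, g (γ i)) ^ (1/(n:ℝ)) :=
        add_le_add (Real.rpow_le_rpow hψαnn (hkey α σ hαpos hσ) hexp)
          (Real.rpow_le_rpow hψβnn (hkey β τ hβpos hτ) hexp)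
    _ = ((∏ i, α i) ^ (1/(n:ℝ)) + (∏ i, β i) ^ (1/(n:ℝ))) * (∏ i, g (γ i)) ^ (1/(n:ℝ)) := by
        rw [Real.mul_rpow hPα.le hG0, Real.mul_rpow hPβ.le hG0, add_mul]
    _ ≤ (∏ i, γ i) ^ (1/(n:ℝ)) * (∏ i, g (γ i)) ^ (1/(n:ℝ)) :=
        mul_le_mul_of_nonneg_right hmink (Real.rpow_nonneg hG0 _)
    _ = ((∏ i, γ i) * ∏ i, g (γ i)) ^ (1/(n:ℝ)) := (Real.mul_rpow hPγ.le hG0).symm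
    _ = (∏ i, ψ (γ i)) ^ (1/(n:ℝ)) := by
        rw [← Finset.prod_mul_distrib]
        congr 1
        exact Finset.prod_congr rfl fun i _ => (hψ_eq (γ i) (hγpos i)).symm
end
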